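/- arXiv:2512.12953 — 4 statements merged into one kernel-verified Lean document; each statement's English description precedes it below -/
import Mathlib

section
/- Let Σ̂ ∈ ℝ^{p×p} be symmetric positive definite, let A ∈ ℝ^{q×p} have full row rank q < p with AΣ̂⁻¹Aᵀ invertible, and let V ∈ ℝ^{p×(p−q)} have orthonormal columns spanning the null space of A (so AV = 0 and VᵀΣ̂V is invertible). Then C_{A⊥} := I_p − Σ̂⁻¹Aᵀ(AΣ̂⁻¹Aᵀ)⁻¹A satisfies C_{A⊥} = V(VᵀΣ̂V)⁻¹VᵀΣ̂. -/
open Matrix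

/-- For symmetric positive definite `Σ̂`, full row rank `A` with
`AΣ̂⁻¹Aᵀ` invertible, and `V` with orthonormal columns spanning the null space of `A`,
the constrained projector satisfies `C_{A⊥} = V(VᵀΣ̂V)⁻¹VᵀΣ̂`. -/
theorem stmt3 {p q : ℕ} (hqp : q < p)
    (S : Matrix (Fin p) (Fin p) ℝ) (hS : S.PosDef)
    (A : Matrix (Fin q) (Fin p) ℝ) (hA : A.rank = q)
    (hASA : IsUnit (A * S⁻¹ * Aᵀ).det)
    (V : Matrix (Fin p) (Fin (p - q)) ℝ) (hV : Vᵀ * V = 1)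
    (hVspan : Set.range (fun α : Fin (p - q) → ℝ => V *ᵥ α) = {β | A *ᵥ β = 0}) :
    (1 : Matrix (Fin p) (Fin p) ℝ) - S⁻¹ * Aᵀ * (A * S⁻¹ * Aᵀ)⁻¹ * A =
      V * (Vᵀ * S * V)⁻¹ * Vᵀ * S := by
  have hSdet : IsUnit S.det := hS.det_pos.ne'.isUnit
  -- A * V = 0
  have hAV : A * V = 0 := by
    ext i j
    have hmem : (fun k => V k j) ∈ Set.range (fun α : Fin (p - q) → ℝ => V *ᵥ α) := by
      exact ⟨Pi.single j 1, by simp [Matrix.mulVec_single]; rfl⟩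
    rw [hVspan] at hmem
    have := congrFun hmem i
    simpa [Matrix.mul_apply, Matrix.mulVec, dotProduct] using this
  -- V has trivial kernel
  have hVinj : ∀ x : Fin (p - q) → ℝ, V *ᵥ x = 0 → x = 0 := by
    intro x hx
    have : Vᵀ *ᵥ (V *ᵥ x) = 0 := by rw [hx, Matrix.mulVec_zero]
    rwa [Matrix.mulVec_mulVec, hV, Matrix.one_mulVec] at this
  -- Vᵀ S V is positive definite
  have hVSV : (Vᵀ * S * V).PosDef := by
    refine Matrix.PosDef.of_dotProduct_mulVec_pos ?_ ?_
    · have := isHermitian_conjTranspose_mul_mul V hS.1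
      simpa [Matrix.conjTranspose_eq_transpose_of_trivial] using this
    · intro x hx
      have hVx : V *ᵥ x ≠ 0 := fun h => hx (hVinj x h)
      have := hS.dotProduct_mulVec_pos hVx
      simpa [Matrix.star_mulVec, Matrix.dotProduct_mulVec, ← Matrix.vecMul_vecMul,
        Matrix.vecMul_transpose] using this
  have hVSVdet : IsUnit (Vᵀ * S * V).det := hVSV.det_pos.ne'.isUnit
  set P := S⁻¹ * Aᵀ * (A * S⁻¹ * Aᵀ)⁻¹ * A with hP
  set Q := V * (Vᵀ * S * V)⁻¹ * Vᵀ * S with hQ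
  set M := 1 - P - Q with hM
  -- A * M = 0
  have hAP : A * P = A := by
    calc A * P = (A * S⁻¹ * Aᵀ) * (A * S⁻¹ * Aᵀ)⁻¹ * A := by
          rw [hP]; simp only [Matrix.mul_assoc]
      _ = A := by rw [Matrix.mul_nonsing_inv _ hASA, Matrix.one_mul]
  have hAQ : A * Q = 0 := by
    rw [hQ]
    simp only [← Matrix.mul_assoc]
    rw [hAV]
    simp
  have hAM : A * M = 0 := by
    rw [hM, Matrix.mul_sub, Matrix.mul_sub, Matrix.mul_one, hAP, hAQ, sub_self, sub_zero]
  -- Vᵀ S M = 0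
  have hVSP : Vᵀ * S * P = 0 := by
    have h1 : Vᵀ * S * (S⁻¹ * Aᵀ * (A * S⁻¹ * Aᵀ)⁻¹ * A)
        = Vᵀ * (S * S⁻¹) * (Aᵀ * ((A * S⁻¹ * Aᵀ)⁻¹ * A)) := by
      simp only [Matrix.mul_assoc]
    have h2 : Vᵀ * Aᵀ = (A * V)ᵀ := by rw [Matrix.transpose_mul]
    rw [hP, h1, Matrix.mul_nonsing_inv _ hSdet, Matrix.mul_one, ← Matrix.mul_assoc, h2,
      hAV, Matrix.transpose_zero, Matrix.zero_mul]
  have hVSQ : Vᵀ * S * Q = Vᵀ * S := by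
    have h1 : Vᵀ * S * (V * (Vᵀ * S * V)⁻¹ * Vᵀ * S)
        = (Vᵀ * S * V) * (Vᵀ * S * V)⁻¹ * (Vᵀ * S) := by
      simp only [Matrix.mul_assoc]
    rw [hQ, h1, Matrix.mul_nonsing_inv _ hVSVdet, Matrix.one_mul]
  have hVSM : Vᵀ * S * M = 0 := by
    rw [hM, Matrix.mul_sub, Matrix.mul_sub, Matrix.mul_one, hVSP, hVSQ, sub_zero, sub_self]
  -- columns of M are in the range of V
  have hcol : ∀ j, ∃ α : Fin (p - q) → ℝ, V *ᵥ α = fun k => M k j := by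
    intro j
    have hmem : (fun k => M k j) ∈ {β : Fin p → ℝ | A *ᵥ β = 0} := by
      have := congrFun (congrArg (fun (X : Matrix (Fin q) (Fin p) ℝ) => fun i => X i j) hAM)
      simp only [Set.mem_setOf_eq]
      ext i
      have h := congrFun (congrFun hAM i) j
      simpa [Matrix.mul_apply, Matrix.mulVec, dotProduct] using h
    rw [← hVspan] at hmem
    exact hmem
  set N : Matrix (Fin (p - q)) (Fin p) ℝ := fun i j => (hcol j).choose i with hN
  have hVN : V * N = M := by
    ext i j
    have := congrFun (hcol j).choose_spec i
    change ∑ x, V i x * N x j = M i j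
    simpa [Matrix.mul_apply, Matrix.mulVec, dotProduct, hN] using this
  -- conclude N = 0, hence M = 0
  have hN0 : N = 0 := by
    have h1 : (Vᵀ * S * V) * N = 0 := by
      rw [Matrix.mul_assoc, hVN, hVSM]
    have h2 : (Vᵀ * S * V)⁻¹ * ((Vᵀ * S * V) * N) = N := by
      rw [← Matrix.mul_assoc, Matrix.nonsing_inv_mul _ hVSVdet, Matrix.one_mul]
    rw [h1, Matrix.mul_zero] at h2
    exact h2.symm
  have hM0 : M = 0 := by rw [← hVN, hN0, Matrix.mul_zero]
  have : (1 : Matrix (Fin p) (Fin p) ℝ) - P - Q = 0 := hM0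
  have := sub_eq_zero.mp this
  calc (1 : Matrix (Fin p) (Fin p) ℝ) - P = Q := this
    _ = V * (Vᵀ * S * V)⁻¹ * Vᵀ * S := rfl
end

section
/- Let Σ̂ ∈ ℝ^{p×p} be symmetric positive definite, let A ∈ ℝ^{q×p} have full row rank q < p with AΣ̂⁻¹Aᵀ invertible, and let V ∈ ℝ^{p×(p−q)} have orthonormal columns spanning the null space of A. Then Tr(C_{A⊥}Σ̂⁻¹) = Tr((VᵀΣ̂V)⁻¹), where C_{A⊥} := I_p − Σ̂⁻¹Aᵀ(AΣ̂⁻¹Aᵀ)⁻¹A. -/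
open Matrix

/-- For symmetric positive definite `Σ̂`, full row rank `A` with
`AΣ̂⁻¹Aᵀ` invertible, and `V` with orthonormal columns spanning the null space of `A`,
`Tr(C_{A⊥}Σ̂⁻¹) = Tr((VᵀΣ̂V)⁻¹)` where `C_{A⊥} = I − Σ̂⁻¹Aᵀ(AΣ̂⁻¹Aᵀ)⁻¹A`. -/
theorem stmt4 {p q : ℕ} (hqp : q < p)
    (S : Matrix (Fin p) (Fin p) ℝ) (hS : S.PosDef)
    (A : Matrix (Fin q) (Fin p) ℝ) (hA : A.rank = q)
    (hASA : IsUnit (A * S⁻¹ * Aᵀ).det)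
    (V : Matrix (Fin p) (Fin (p - q)) ℝ) (hV : Vᵀ * V = 1)
    (hVspan : Set.range (fun α : Fin (p - q) → ℝ => V *ᵥ α) = {β | A *ᵥ β = 0}) :
    Matrix.trace
        (((1 : Matrix (Fin p) (Fin p) ℝ) - S⁻¹ * Aᵀ * (A * S⁻¹ * Aᵀ)⁻¹ * A) * S⁻¹) =
      Matrix.trace (Vᵀ * S * V)⁻¹ := by
  have hSdet : IsUnit S.det := hS.det_pos.ne'.isUnit
  have hSi : S⁻¹ * S = 1 := nonsing_inv_mul S hSdet
  -- A * V = 0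
  have hAV : A * V = 0 := by
    ext i j
    have hmem : (V *ᵥ Pi.single j 1) ∈ {β | A *ᵥ β = 0} := by
      rw [← hVspan]; exact Set.mem_range_self _
    have h0 : A *ᵥ (V *ᵥ Pi.single j 1) = 0 := hmem
    have hc : (V *ᵥ Pi.single j 1) = fun k => V k j := by
      ext k; simp [mulVec_single]
    have := congrFun h0 i
    rw [hc] at this
    simpa [mulVec, dotProduct, Matrix.mul_apply] using this
  have hVA : Vᵀ * Aᵀ = 0 := by
    have := congrArg transpose hAV
    simpa [transpose_mul] using this
  have hVH : Vᴴ = Vᵀ := by ext i j; simp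
  -- G := Vᵀ S V is positive definite, hence invertible
  have hG : (Vᵀ * S * V).PosDef := by
    refine PosDef.of_dotProduct_mulVec_pos ?_ ?_
    · have := isHermitian_conjTranspose_mul_mul V hS.1
      rwa [hVH] at this
    · intro x hx
      have hVx : V *ᵥ x ≠ 0 := by
        intro h
        apply hx
        have : Vᵀ *ᵥ (V *ᵥ x) = x := by
          rw [mulVec_mulVec, hV, one_mulVec]
        rw [h, mulVec_zero] at this
        exact this.symm
      have hpos := hS.dotProduct_mulVec_pos hVx
      have heq : dotProduct (star x) ((Vᵀ * S * V) *ᵥ x)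
          = dotProduct (star (V *ᵥ x)) (S *ᵥ (V *ᵥ x)) := by
        simp only [star_trivial, ← mulVec_mulVec]
        rw [dotProduct_mulVec, vecMul_transpose]
      rw [heq]; exact hpos
  have hGi : (Vᵀ * S * V)⁻¹ * (Vᵀ * S * V) = 1 :=
    nonsing_inv_mul _ hG.det_pos.ne'.isUnit
  have hHi : (A * S⁻¹ * Aᵀ)⁻¹ * (A * S⁻¹ * Aᵀ) = 1 := nonsing_inv_mul _ hASA
  -- block matrices
  set M₁ : Matrix (Fin p) (Fin p) ℝ :=
    ((1 : Matrix (Fin p) (Fin p) ℝ) - S⁻¹ * Aᵀ * (A * S⁻¹ * Aᵀ)⁻¹ * A) * S⁻¹ with hM₁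
  set M₂ : Matrix (Fin p) (Fin p) ℝ := V * (Vᵀ * S * V)⁻¹ * Vᵀ with hM₂
  set B : Matrix (Fin p) (Fin (p - q) ⊕ Fin q) ℝ := fromCols (S * V) Aᵀ with hB
  set L : Matrix (Fin (p - q) ⊕ Fin q) (Fin p) ℝ :=
    fromRows ((Vᵀ * S * V)⁻¹ * Vᵀ) ((A * S⁻¹ * Aᵀ)⁻¹ * (A * S⁻¹)) with hL
  have e11 : (Vᵀ * S * V)⁻¹ * Vᵀ * (S * V) = 1 := by
    rw [Matrix.mul_assoc ((Vᵀ * S * V)⁻¹) Vᵀ (S * V), ← Matrix.mul_assoc Vᵀ S V]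
    exact hGi
  have e12 : (Vᵀ * S * V)⁻¹ * Vᵀ * Aᵀ = 0 := by
    rw [Matrix.mul_assoc ((Vᵀ * S * V)⁻¹) Vᵀ Aᵀ, hVA, Matrix.mul_zero]
  have e21 : (A * S⁻¹ * Aᵀ)⁻¹ * (A * S⁻¹) * (S * V) = 0 := by
    rw [Matrix.mul_assoc ((A * S⁻¹ * Aᵀ)⁻¹) (A * S⁻¹) (S * V),
      Matrix.mul_assoc A S⁻¹ (S * V), ← Matrix.mul_assoc S⁻¹ S V, hSi,
      Matrix.one_mul, hAV, Matrix.mul_zero]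
  have e22 : (A * S⁻¹ * Aᵀ)⁻¹ * (A * S⁻¹) * Aᵀ = 1 := by
    rw [Matrix.mul_assoc ((A * S⁻¹ * Aᵀ)⁻¹) (A * S⁻¹) Aᵀ]
    exact hHi
  have hLB : L * B = 1 := by
    rw [hL, hB, fromRows_mul_fromCols, e11, e12, e21, e22, fromBlocks_one]
  have hBL : B * L = 1 := by
    have e : Fin (p - q) ⊕ Fin q ≃ Fin p :=
      finSumFinEquiv.trans (finCongr (Nat.sub_add_cancel hqp.le))
    exact (mul_eq_one_comm_of_equiv e).mp hLB
  have c11 : ((1 : Matrix (Fin p) (Fin p) ℝ) - S⁻¹ * Aᵀ * (A * S⁻¹ * Aᵀ)⁻¹ * A) * S⁻¹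
      * (S * V) = V := by
    have hkey : ((1 : Matrix (Fin p) (Fin p) ℝ) - S⁻¹ * Aᵀ * (A * S⁻¹ * Aᵀ)⁻¹ * A) * S⁻¹
        * (S * V) = ((1 : Matrix (Fin p) (Fin p) ℝ) - S⁻¹ * Aᵀ * (A * S⁻¹ * Aᵀ)⁻¹ * A)
        * ((S⁻¹ * S) * V) := by simp only [Matrix.mul_assoc]
    rw [hkey, hSi, Matrix.one_mul, Matrix.sub_mul, Matrix.one_mul,
      Matrix.mul_assoc (S⁻¹ * Aᵀ * (A * S⁻¹ * Aᵀ)⁻¹) A V, hAV, Matrix.mul_zero, sub_zero]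
  have c12 : ((1 : Matrix (Fin p) (Fin p) ℝ) - S⁻¹ * Aᵀ * (A * S⁻¹ * Aᵀ)⁻¹ * A) * S⁻¹
      * Aᵀ = 0 := by
    rw [Matrix.sub_mul, Matrix.sub_mul, Matrix.one_mul]
    have hkey : S⁻¹ * Aᵀ * (A * S⁻¹ * Aᵀ)⁻¹ * A * S⁻¹ * Aᵀ
        = S⁻¹ * Aᵀ * ((A * S⁻¹ * Aᵀ)⁻¹ * (A * S⁻¹ * Aᵀ)) := by
      simp only [Matrix.mul_assoc]
    rw [hkey, hHi, Matrix.mul_one, sub_self]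
  have d11 : V * (Vᵀ * S * V)⁻¹ * Vᵀ * (S * V) = V := by
    have hkey : V * (Vᵀ * S * V)⁻¹ * Vᵀ * (S * V)
        = V * ((Vᵀ * S * V)⁻¹ * (Vᵀ * S * V)) := by
      simp only [Matrix.mul_assoc]
    rw [hkey, hGi, Matrix.mul_one]
  have d12 : V * (Vᵀ * S * V)⁻¹ * Vᵀ * Aᵀ = 0 := by
    rw [Matrix.mul_assoc (V * (Vᵀ * S * V)⁻¹) Vᵀ Aᵀ, hVA, Matrix.mul_zero]
  have h1 : M₁ * B = fromCols V 0 := by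
    rw [hM₁, hB, mul_fromCols, c11, c12]
  have h2 : M₂ * B = fromCols V 0 := by
    rw [hM₂, hB, mul_fromCols, d11, d12]
  have hM : M₁ = M₂ := by
    calc M₁ = M₁ * (B * L) := by rw [hBL, Matrix.mul_one]
    _ = (M₁ * B) * L := (Matrix.mul_assoc M₁ B L).symm
    _ = (M₂ * B) * L := by rw [h1, h2]
    _ = M₂ * (B * L) := Matrix.mul_assoc M₂ B L
    _ = M₂ := by rw [hBL, Matrix.mul_one]
  show Matrix.trace M₁ = _
  rw [hM, hM₂, Matrix.trace_mul_comm, ← Matrix.mul_assoc, hV, Matrix.one_mul]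
end

section
/- Fix a design matrix X ∈ ℝ^{n×p} with Σ̂_n := XᵀX/n invertible, a constraint matrix A ∈ ℝ^{q×p} of full row rank q < p with AΣ̂_n⁻¹Aᵀ invertible, β* ∈ ℝ^p with Aβ* = c, and let ε = (ε_1,…,ε_n) have independent components with E[ε_i] = 0 and Var(ε_i) = σ². Let y = Xβ* + ε and β̃ := C_{A⊥}β̂_LS + Σ̂_n⁻¹Aᵀ(AΣ̂_n⁻¹Aᵀ)⁻¹c. Then E‖β̃ − β*‖² = (σ²/n)·Tr(C_{A⊥}Σ̂_n⁻¹). -/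
open Matrix MeasureTheory ProbabilityTheory

noncomputable section

/-- Squared Euclidean norm of a vector. -/
def sqNorm {m : Type*} [Fintype m] (v : m → ℝ) : ℝ := ∑ i, (v i) ^ 2

/-- Auxiliary: expectation of the squared norm of a linear image of independent
centered noise. -/
theorem sqNorm_linear_noise {n p : ℕ}
    {Ω : Type} [MeasurableSpace Ω] (μ : Measure Ω) [IsProbabilityMeasure μ]
    (σ : ℝ) (ε : Ω → Fin n → ℝ) (hmeas : ∀ i, Measurable fun ω => ε ω i)
    (hindep : iIndepFun (fun i ω => ε ω i) μ)
    (hmean : ∀ i, ∫ ω, ε ω i ∂μ = 0)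
    (hvar : ∀ i, ∫ ω, (ε ω i) ^ 2 ∂μ = σ ^ 2)
    (hint : ∀ i, Integrable (fun ω => (ε ω i) ^ 2) μ)
    (L : Matrix (Fin p) (Fin n) ℝ) :
    ∫ ω, sqNorm (L *ᵥ ε ω) ∂μ = σ ^ 2 * Matrix.trace (L * Lᵀ) := by
  have hmem : ∀ i, MemLp (fun ω => ε ω i) 2 μ := fun i =>
    (memLp_two_iff_integrable_sq (hmeas i).aestronglyMeasurable).2 (hint i)
  have hint1 : ∀ i, Integrable (fun ω => ε ω i) μ := fun i =>
    (hmem i).integrable one_le_two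
  have hintprod : ∀ j k, Integrable (fun ω => ε ω j * ε ω k) μ := by
    intro j k
    rcases eq_or_ne j k with rfl | hjk
    · simpa [pow_two] using hint j
    · exact (hindep.indepFun hjk).integrable_mul (hint1 j) (hint1 k)
  have hcov : ∀ j k, ∫ ω, ε ω j * ε ω k ∂μ = if j = k then σ ^ 2 else 0 := by
    intro j k
    rcases eq_or_ne j k with rfl | hjk
    · simpa [pow_two] using hvar j
    · have h := (hindep.indepFun hjk).integral_mul_eq_mul_integral (hint1 j).aestronglyMeasurable (hint1 k).aestronglyMeasurable
      have h' : (∫ ω, ε ω j * ε ω k ∂μ)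
          = integral μ ((fun ω => ε ω j) * fun ω => ε ω k) := rfl
      rw [if_neg hjk, h', h, hmean j, zero_mul]
  have expand : ∀ v : Fin n → ℝ,
      sqNorm (L *ᵥ v) = ∑ i, ∑ j, ∑ k, L i j * L i k * (v j * v k) := by
    intro v
    unfold sqNorm
    refine Finset.sum_congr rfl fun i _ => ?_
    have : (L *ᵥ v) i = ∑ j, L i j * v j := by
      simp [Matrix.mulVec, dotProduct]
    rw [this, pow_two, Finset.sum_mul_sum]
    refine Finset.sum_congr rfl fun j _ => Finset.sum_congr rfl fun k _ => ?_
    ring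
  simp_rw [expand]
  rw [integral_finset_sum _ (fun i _ =>
    integrable_finset_sum _ (fun j _ => integrable_finset_sum _ (fun k _ =>
      (hintprod j k).const_mul _)))]
  have : ∀ i, (∫ ω, ∑ j, ∑ k, L i j * L i k * (ε ω j * ε ω k) ∂μ)
      = ∑ j, L i j * L i j * σ ^ 2 := by
    intro i
    rw [integral_finset_sum _ (fun j _ => integrable_finset_sum _ (fun k _ =>
      (hintprod j k).const_mul _))]
    refine Finset.sum_congr rfl fun j _ => ?_
    rw [integral_finset_sum _ (fun k _ => (hintprod j k).const_mul _)]
    have : ∀ k, (∫ ω, L i j * L i k * (ε ω j * ε ω k) ∂μ)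
        = L i j * L i k * (if j = k then σ ^ 2 else 0) := by
      intro k
      rw [integral_const_mul, hcov]
    simp_rw [this, mul_ite, mul_zero]
    simp
  simp_rw [this]
  rw [Matrix.trace]
  rw [Finset.mul_sum]
  refine Finset.sum_congr rfl fun i _ => ?_
  simp only [Matrix.diag_apply, Matrix.mul_apply, Matrix.transpose_apply]
  rw [Finset.mul_sum]
  refine Finset.sum_congr rfl fun j _ => ?_
  ring

/-- Fixed design `X` with `Σ̂ₙ := XᵀX/n` invertible, `A` of full row rank
`q < p` with `AΣ̂ₙ⁻¹Aᵀ` invertible, `Aβ* = c`, and noise `ε` with independent components of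
mean `0` and variance `σ²`.  For `y = Xβ* + ε`, the constrained least squares estimator
`β̃ = C_{A⊥}β̂_LS + Σ̂ₙ⁻¹Aᵀ(AΣ̂ₙ⁻¹Aᵀ)⁻¹c` satisfies
`E‖β̃ − β*‖² = (σ²/n)·Tr(C_{A⊥}Σ̂ₙ⁻¹)`. -/
theorem stmt5 {n p q : ℕ} (hqp : q < p)
    {Ω : Type} [MeasurableSpace Ω] (μ : Measure Ω) [IsProbabilityMeasure μ]
    (X : Matrix (Fin n) (Fin p) ℝ) (A : Matrix (Fin q) (Fin p) ℝ)
    (βs : Fin p → ℝ) (c : Fin q → ℝ) (σ : ℝ)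
    (hA : A.rank = q) (hc : A *ᵥ βs = c)
    (hS : IsUnit ((n : ℝ)⁻¹ • (Xᵀ * X)).det)
    (hASA : IsUnit (A * ((n : ℝ)⁻¹ • (Xᵀ * X))⁻¹ * Aᵀ).det)
    (ε : Ω → Fin n → ℝ) (hmeas : ∀ i, Measurable fun ω => ε ω i)
    (hindep : iIndepFun (fun i ω => ε ω i) μ)
    (hmean : ∀ i, ∫ ω, ε ω i ∂μ = 0)
    (hvar : ∀ i, ∫ ω, (ε ω i) ^ 2 ∂μ = σ ^ 2)
    (hint : ∀ i, Integrable (fun ω => (ε ω i) ^ 2) μ) :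
    let S := (n : ℝ)⁻¹ • (Xᵀ * X)
    let CA := (1 : Matrix (Fin p) (Fin p) ℝ) - S⁻¹ * Aᵀ * (A * S⁻¹ * Aᵀ)⁻¹ * A
    ∫ ω, sqNorm ((CA *ᵥ (((Xᵀ * X)⁻¹ * Xᵀ) *ᵥ (X *ᵥ βs + ε ω)) +
          (S⁻¹ * Aᵀ * (A * S⁻¹ * Aᵀ)⁻¹) *ᵥ c) - βs) ∂μ =
      σ ^ 2 / n * Matrix.trace (CA * S⁻¹) := by
  intro S CA
  set B := Xᵀ * X with hB
  have hSdef : S = (n : ℝ)⁻¹ • B := rfl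
  have hp : 0 < p := Nat.pos_of_ne_zero (by omega)
  have hdet : S.det = ((n : ℝ)⁻¹) ^ p * B.det := by
    rw [hSdef, Matrix.det_smul]; simp
  have hn : (n : ℝ) ≠ 0 := by
    intro h
    have : S.det = 0 := by rw [hdet, h]; norm_num [zero_pow hp.ne']
    rw [this] at hS
    exact (isUnit_iff_ne_zero.mp hS) rfl
  have hBu : IsUnit B.det := by
    rw [isUnit_iff_ne_zero]
    intro h
    have : S.det = 0 := by rw [hdet, h, mul_zero]
    rw [this] at hS
    exact (isUnit_iff_ne_zero.mp hS) rfl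
  have hBinv : B⁻¹ * B = 1 := Matrix.nonsing_inv_mul B hBu
  have hSinv : S⁻¹ * S = 1 := Matrix.nonsing_inv_mul S hS
  set G := A * S⁻¹ * Aᵀ with hG
  have hGinv : G⁻¹ * G = 1 := Matrix.nonsing_inv_mul G hASA
  have hCAdef : CA = 1 - S⁻¹ * Aᵀ * G⁻¹ * A := rfl
  set M := CA * B⁻¹ * Xᵀ with hM
  -- pointwise identity
  have key : ∀ ω, ((CA *ᵥ ((B⁻¹ * Xᵀ) *ᵥ (X *ᵥ βs + ε ω)) +
      (S⁻¹ * Aᵀ * G⁻¹) *ᵥ c) - βs) = M *ᵥ ε ω := by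
    intro ω
    have h1 : (B⁻¹ * Xᵀ) *ᵥ (X *ᵥ βs + ε ω) = βs + (B⁻¹ * Xᵀ) *ᵥ ε ω := by
      rw [Matrix.mulVec_add, Matrix.mulVec_mulVec, Matrix.mul_assoc, ← hB, hBinv,
        Matrix.one_mulVec]
    have h2 : CA *ᵥ βs + (S⁻¹ * Aᵀ * G⁻¹ * A) *ᵥ βs = βs := by
      rw [← Matrix.add_mulVec, hCAdef, sub_add_cancel, Matrix.one_mulVec]
    have h3 : CA *ᵥ ((B⁻¹ * Xᵀ) *ᵥ ε ω) = M *ᵥ ε ω := by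
      rw [Matrix.mulVec_mulVec, hM, Matrix.mul_assoc]
    rw [h1, Matrix.mulVec_add, ← hc, h3, Matrix.mulVec_mulVec]
    calc CA *ᵥ βs + M *ᵥ ε ω + (S⁻¹ * Aᵀ * G⁻¹ * A) *ᵥ βs - βs
        = (CA *ᵥ βs + (S⁻¹ * Aᵀ * G⁻¹ * A) *ᵥ βs) + M *ᵥ ε ω - βs := by abel
      _ = M *ᵥ ε ω := by rw [h2]; abel
  have hcong : (fun ω => sqNorm ((CA *ᵥ ((B⁻¹ * Xᵀ) *ᵥ (X *ᵥ βs + ε ω)) +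
      (S⁻¹ * Aᵀ * G⁻¹) *ᵥ c) - βs)) = fun ω => sqNorm (M *ᵥ ε ω) :=
    funext fun ω => by rw [key ω]
  rw [hcong, sqNorm_linear_noise μ σ ε hmeas hindep hmean hvar hint M]
  -- trace algebra
  have hBt : Bᵀ = B := by rw [hB, Matrix.transpose_mul, Matrix.transpose_transpose]
  have hBinvt : (B⁻¹)ᵀ = B⁻¹ := by rw [Matrix.transpose_nonsing_inv, hBt]
  have hSt : Sᵀ = S := by rw [hSdef, Matrix.transpose_smul, hBt]
  have hSinvt : (S⁻¹)ᵀ = S⁻¹ := by rw [Matrix.transpose_nonsing_inv, hSt]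
  have hGt : Gᵀ = G := by
    rw [hG]
    simp only [Matrix.transpose_mul, Matrix.transpose_transpose, hSinvt, Matrix.mul_assoc]
  have hGinvt : (G⁻¹)ᵀ = G⁻¹ := by rw [Matrix.transpose_nonsing_inv, hGt]
  have hGG : G⁻¹ * (A * (S⁻¹ * Aᵀ)) = 1 := by
    rw [show A * (S⁻¹ * Aᵀ) = G by rw [hG, Matrix.mul_assoc]]
    exact hGinv
  have hGA : ∀ (Z : Matrix (Fin q) (Fin p) ℝ),
      G⁻¹ * (A * (S⁻¹ * (Aᵀ * (G⁻¹ * Z)))) = G⁻¹ * Z := by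
    intro Z
    calc G⁻¹ * (A * (S⁻¹ * (Aᵀ * (G⁻¹ * Z))))
        = (G⁻¹ * (A * (S⁻¹ * Aᵀ))) * (G⁻¹ * Z) := by simp only [Matrix.mul_assoc]
      _ = G⁻¹ * Z := by rw [hGG, Matrix.one_mul]
  have hCAt : CAᵀ = 1 - Aᵀ * (G⁻¹ * (A * S⁻¹)) := by
    rw [hCAdef]
    simp only [Matrix.transpose_sub, Matrix.transpose_one, Matrix.transpose_mul,
      Matrix.transpose_transpose, hGinvt, hSinvt, Matrix.mul_assoc]
  have hproj : CA * S⁻¹ * CAᵀ = CA * S⁻¹ := by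
    rw [hCAdef, hCAt]
    simp only [Matrix.sub_mul, Matrix.mul_sub, Matrix.one_mul, Matrix.mul_one,
      Matrix.mul_assoc]
    rw [hGA (A * S⁻¹)]
    abel
  have hBS : B⁻¹ = (n : ℝ)⁻¹ • S⁻¹ := by
    apply Matrix.inv_eq_left_inv
    rw [Matrix.smul_mul, ← Matrix.mul_smul, ← hSdef, hSinv]
  have hXZ : ∀ (Z : Matrix (Fin p) (Fin p) ℝ), Xᵀ * (X * Z) = B * Z := fun Z => by
    rw [← Matrix.mul_assoc, ← hB]
  have hMt : Mᵀ = X * (B⁻¹ * CAᵀ) := by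
    rw [hM]
    simp only [Matrix.transpose_mul, Matrix.transpose_transpose, hBinvt, Matrix.mul_assoc]
  have hMMT : M * Mᵀ = (n : ℝ)⁻¹ • (CA * S⁻¹) := by
    have step1 : M * Mᵀ = CA * (B⁻¹ * CAᵀ) := by
      rw [hMt, hM]
      simp only [Matrix.mul_assoc]
      rw [hXZ (B⁻¹ * CAᵀ), show B⁻¹ * (B * (B⁻¹ * CAᵀ)) = (B⁻¹ * B) * (B⁻¹ * CAᵀ) by
        simp only [Matrix.mul_assoc], hBinv, Matrix.one_mul]
    rw [step1, hBS, Matrix.smul_mul, Matrix.mul_smul]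
    congr 1
    rw [← Matrix.mul_assoc, hproj]
  rw [hMMT, Matrix.trace_smul, smul_eq_mul, div_eq_mul_inv]
  ring
end
end

section
/- Consider the model y = Xβ* + ε where X ∈ ℝ^{n×p} has i.i.d. rows drawn from N(0, Σ) with Σ symmetric positive definite, ε has i.i.d. components with mean 0 and variance σ² and is independent of X, A ∈ ℝ^{q×p} has full row rank q < p, and Aβ* = 0 (constraint vector c = 0). Then the j-th coordinate of the projected oracle estimator β̂_{Σ,P} := (1/n)·P_{A⊥}Σ⁻¹Xᵀy satisfies Var(β̂_{Σ,P,j}) = (1/n)·(β*_j)² + ((σ² + ‖Σ^{1/2}β*‖²)/n)·e_jᵀP_{A⊥}Σ⁻¹P_{A⊥}e_j. -/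
open Matrix MeasureTheory ProbabilityTheory Real Filter Set

noncomputable section

/-- The square root of a positive semidefinite matrix, as defined in the older Mathlib
(removed since in favour of `CFC.sqrt`). -/
def Matrix.PosSemidef.sqrt {n : Type*} [Fintype n] [DecidableEq n] {A : Matrix n n ℝ}
    (hA : A.PosSemidef) : Matrix n n ℝ :=
  hA.1.eigenvectorUnitary.1 * diagonal ((↑) ∘ Real.sqrt ∘ hA.1.eigenvalues) *
    (star hA.1.eigenvectorUnitary : Matrix n n ℝ)

/-- Variance of a real random variable `Z` under `μ`. -/
def rvVar {Ω : Type*} [MeasurableSpace Ω] (μ : Measure Ω) (Z : Ω → ℝ) : ℝ :=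
  ∫ ω, (Z ω - ∫ ω', Z ω' ∂μ) ^ 2 ∂μ

lemma psd_sqrt_mul_self {m : Type*} [Fintype m] [DecidableEq m] {B : Matrix m m ℝ}
    (hB : B.PosSemidef) : hB.sqrt * hB.sqrt = B := by
  conv_rhs => rw [hB.1.spectral_theorem, Unitary.conjStarAlgAut_apply]
  unfold Matrix.PosSemidef.sqrt
  have hU : (star hB.1.eigenvectorUnitary : Matrix m m ℝ) * hB.1.eigenvectorUnitary.1 = 1 :=
    Unitary.coe_star_mul_self _
  calc _ = hB.1.eigenvectorUnitary.1 * (diagonal ((↑) ∘ Real.sqrt ∘ hB.1.eigenvalues) *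
        ((star hB.1.eigenvectorUnitary : Matrix m m ℝ) * hB.1.eigenvectorUnitary.1) *
        diagonal ((↑) ∘ Real.sqrt ∘ hB.1.eigenvalues)) *
        (star hB.1.eigenvectorUnitary : Matrix m m ℝ) := by simp only [Matrix.mul_assoc]
    _ = _ := by
      rw [hU, Matrix.mul_one, diagonal_mul_diagonal]
      congr 3
      funext i
      simp [Real.mul_self_sqrt (hB.eigenvalues_nonneg i)]

lemma psd_sqrt_transpose {m : Type*} [Fintype m] [DecidableEq m] {B : Matrix m m ℝ}
    (hB : B.PosSemidef) : (hB.sqrt)ᵀ = hB.sqrt := by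
  rw [← conjTranspose_eq_transpose_of_trivial]
  unfold Matrix.PosSemidef.sqrt
  simp [conjTranspose_mul, Matrix.mul_assoc, Unitary.coe_star, star_eq_conjTranspose]


theorem pi_integrable_prod {n : ℕ} {E : Fin n → Type*} [∀ i, MeasurableSpace (E i)]
    (μ : ∀ i, Measure (E i)) [∀ i, SigmaFinite (μ i)]
    {f : (i : Fin n) → E i → ℝ} (hf : ∀ i, Integrable (f i) (μ i)) :
    Integrable (fun x : (i : Fin n) → E i => ∏ i, f i (x i)) (Measure.pi μ) := by
  induction n with
  | zero =>
      simp only [Finset.univ_eq_empty, Finset.prod_empty]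
      rw [integrable_const_iff]
      right
      constructor
      rw [Measure.pi_empty_univ]
      exact ENNReal.one_lt_top
  | succ n n_ih =>
      have := (measurePreserving_piFinSuccAbove μ 0).symm
      rw [← this.integrable_comp_emb (MeasurableEquiv.measurableEmbedding _)]
      simp_rw [MeasurableEquiv.piFinSuccAbove_symm_apply, Fin.insertNthEquiv,
        Fin.prod_univ_succ, Fin.insertNth_zero]
      simp only [Fin.zero_succAbove, cast_eq, Function.comp_def, Fin.cons_zero, Fin.cons_succ,
        Equiv.coe_fn_mk]
      have : Integrable (fun (x : (j : Fin n) → E (Fin.succ j)) ↦ ∏ j, f (Fin.succ j) (x j))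
          (Measure.pi fun j => μ (Fin.succ j)) := n_ih _ (fun i ↦ hf _)
      exact Integrable.mul_prod (hf 0) this

theorem pi_integral_prod {n : ℕ} {E : Fin n → Type*} [∀ i, MeasurableSpace (E i)]
    (μ : ∀ i, Measure (E i)) [∀ i, SigmaFinite (μ i)]
    (f : (i : Fin n) → E i → ℝ) :
    ∫ x : (i : Fin n) → E i, ∏ i, f i (x i) ∂(Measure.pi μ) = ∏ i, ∫ x, f i x ∂(μ i) := by
  induction n with
  | zero =>
      simp only [Finset.univ_eq_empty, Finset.prod_empty, integral_const,
        Measure.real, Measure.pi_empty_univ, ENNReal.toReal_one, smul_eq_mul, mul_one, one_smul]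
  | succ n n_ih =>
      calc
        _ = ∫ x : E 0 × ((i : Fin n) → E (Fin.succ i)),
            f 0 x.1 * ∏ i : Fin n, f (Fin.succ i) (x.2 i)
              ∂((μ 0).prod (Measure.pi fun i => μ (Fin.succ i))) := by
          rw [← ((measurePreserving_piFinSuccAbove μ 0).symm).integral_comp']
          simp_rw [MeasurableEquiv.piFinSuccAbove_symm_apply, Fin.insertNthEquiv,
            Fin.prod_univ_succ, Fin.insertNth_zero, Equiv.coe_fn_mk, Fin.cons_succ]
          rfl
        _ = (∫ x, f 0 x ∂(μ 0)) * ∏ i : Fin n, ∫ (x : E (Fin.succ i)), f (Fin.succ i) x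
              ∂(μ (Fin.succ i)) := by
          rw [← n_ih, ← integral_prod_mul]
        _ = ∏ i, ∫ x, f i x ∂(μ i) := by rw [Fin.prod_univ_succ]

lemma quartic_bound (x : ℝ) : x ^ 4 ≤ 64 * exp (x ^ 2 / 4) := by
  have h : x ^ 2 / 8 + 1 ≤ exp (x ^ 2 / 8) := by
    simpa using Real.add_one_le_exp (x ^ 2 / 8)
  have h2 : exp (x ^ 2 / 8) * exp (x ^ 2 / 8) = exp (x ^ 2 / 4) := by
    rw [← Real.exp_add]; ring_nf
  nlinarith [sq_nonneg x, exp_pos (x ^ 2 / 8),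
    mul_le_mul h h (by positivity) (exp_pos _).le]

lemma abs_pow_le_aux {k : ℕ} (hk : k ≤ 4) (x : ℝ) : |x| ^ k ≤ 1 + x ^ 4 := by
  rcases le_total |x| 1 with h | h
  · have := pow_le_one₀ (abs_nonneg x) h (n := k)
    nlinarith [sq_nonneg (x ^ 2)]
  · have h1 : |x| ^ k ≤ |x| ^ 4 := pow_le_pow_right₀ h hk
    have h2 : |x| ^ 4 = x ^ 4 := by
      rw [← abs_pow, abs_of_nonneg (by positivity)]
    nlinarith [sq_nonneg (x ^ 2)]

lemma integ_pow_gauss {k : ℕ} (hk : k ≤ 4) :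
    Integrable (fun x : ℝ => x ^ k * exp (-(x ^ 2) / 2)) := by
  have hg : Integrable (fun x : ℝ =>
      exp (-(2⁻¹ : ℝ) * x ^ 2) + 64 * exp (-(4⁻¹ : ℝ) * x ^ 2)) :=
    (integrable_exp_neg_mul_sq (by norm_num)).add
      ((integrable_exp_neg_mul_sq (by norm_num)).const_mul 64)
  refine hg.mono' (((continuous_pow k).mul (by continuity)).aestronglyMeasurable) ?_
  refine ae_of_all _ fun x => ?_
  have hE : exp (-(x ^ 2) / 2) = exp (-(2⁻¹ : ℝ) * x ^ 2) := by ring_nf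
  have hpos := exp_pos (-(2⁻¹ : ℝ) * x ^ 2)
  have h1 : ‖x ^ k * exp (-(x ^ 2) / 2)‖ = |x| ^ k * exp (-(2⁻¹ : ℝ) * x ^ 2) := by
    rw [hE, norm_mul, norm_pow, Real.norm_eq_abs, Real.norm_eq_abs, abs_of_pos hpos]
  rw [h1]
  have h2 : |x| ^ k * exp (-(2⁻¹ : ℝ) * x ^ 2) ≤ (1 + x ^ 4) * exp (-(2⁻¹ : ℝ) * x ^ 2) :=
    mul_le_mul_of_nonneg_right (abs_pow_le_aux hk x) hpos.le
  refine h2.trans ?_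
  have h3 : x ^ 4 * exp (-(2⁻¹ : ℝ) * x ^ 2) ≤ 64 * exp (-(4⁻¹ : ℝ) * x ^ 2) := by
    have hsplit : exp (-(2⁻¹ : ℝ) * x ^ 2) = exp (-(x ^ 2) / 4) * exp (-(x ^ 2) / 4) := by
      rw [← Real.exp_add]; ring_nf
    have hb : x ^ 4 * exp (-(x ^ 2) / 4) ≤ 64 := by
      have := quartic_bound x
      have he : exp (x ^ 2 / 4) * exp (-(x ^ 2) / 4) = 1 := by
        rw [← Real.exp_add]; ring_nf; exact Real.exp_zero
      nlinarith [exp_pos (-(x ^ 2) / 4), exp_pos (x ^ 2 / 4)]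
    calc x ^ 4 * exp (-(2⁻¹ : ℝ) * x ^ 2)
        = (x ^ 4 * exp (-(x ^ 2) / 4)) * exp (-(x ^ 2) / 4) := by rw [hsplit]; ring
      _ ≤ 64 * exp (-(x ^ 2) / 4) := mul_le_mul_of_nonneg_right hb (exp_pos _).le
      _ = 64 * exp (-(4⁻¹ : ℝ) * x ^ 2) := by ring_nf
  nlinarith [exp_pos (-(4⁻¹:ℝ) * x ^ 2)]

lemma gauss_J0 : ∫ x : ℝ, exp (-(x ^ 2) / 2) = Real.sqrt (2 * π) := by
  have := integral_gaussian (2⁻¹ : ℝ)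
  have he : ∀ x : ℝ, exp (-(2⁻¹:ℝ) * x ^ 2) = exp (-(x ^ 2) / 2) := fun x => by ring_nf
  simp_rw [he] at this
  rw [this]
  congr 1
  rw [div_eq_mul_inv, inv_inv]; ring

lemma gauss_J_odd {k : ℕ} (hodd : Odd k) (hint : Integrable (fun x : ℝ => x ^ k * exp (-(x ^ 2) / 2))) :
    ∫ x : ℝ, x ^ k * exp (-(x ^ 2) / 2) = 0 := by
  have h := (Measure.measurePreserving_neg (volume : Measure ℝ)).integral_comp
    (Homeomorph.neg ℝ).measurableEmbedding (fun x => x ^ k * exp (-(x ^ 2) / 2))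
  have h2 : ∀ x : ℝ, (-x) ^ k * exp (-((-x) ^ 2) / 2) = -(x ^ k * exp (-(x ^ 2) / 2)) := by
    intro x
    rw [hodd.neg_pow, neg_sq]; ring
  simp_rw [h2, integral_neg] at h
  linarith

lemma hasDerivAt_E (x : ℝ) :
    HasDerivAt (fun y : ℝ => exp (-(y ^ 2) / 2)) (-x * exp (-(x ^ 2) / 2)) x := by
  have h1 : HasDerivAt (fun y : ℝ => -(y ^ 2) / 2) (-x) x := by
    have := ((hasDerivAt_pow 2 x).neg).div_const 2
    refine this.congr_deriv ?_
    push_cast; ring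
  simpa [mul_comm] using h1.exp

lemma tendsto_F_top (m : ℕ) :
    Tendsto (fun x : ℝ => x ^ m * exp (-(x ^ 2) / 2)) atTop (nhds 0) := by
  have h := tendsto_rpow_abs_mul_exp_neg_mul_sq_cocompact (by norm_num : (0:ℝ) < 2⁻¹) (m : ℝ)
  have h2 : Tendsto (fun x : ℝ => |x| ^ (m : ℝ) * exp (-(2⁻¹:ℝ) * x ^ 2)) atTop (nhds 0) := by
    refine h.mono_left ?_
    rw [cocompact_eq_atBot_atTop]
    exact le_sup_right
  refine squeeze_zero_norm (fun x => ?_) h2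
  have hE : exp (-(x ^ 2) / 2) = exp (-(2⁻¹:ℝ) * x ^ 2) := by ring_nf
  rw [hE, norm_mul, norm_pow, Real.norm_eq_abs, Real.norm_eq_abs, abs_of_pos (exp_pos _),
    ← Real.rpow_natCast |x| m]

lemma tendsto_F_bot (m : ℕ) :
    Tendsto (fun x : ℝ => x ^ m * exp (-(x ^ 2) / 2)) atBot (nhds 0) := by
  have h := tendsto_rpow_abs_mul_exp_neg_mul_sq_cocompact (by norm_num : (0:ℝ) < 2⁻¹) (m : ℝ)
  have h2 : Tendsto (fun x : ℝ => |x| ^ (m : ℝ) * exp (-(2⁻¹:ℝ) * x ^ 2)) atBot (nhds 0) := by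
    refine h.mono_left ?_
    rw [cocompact_eq_atBot_atTop]
    exact le_sup_left
  refine squeeze_zero_norm (fun x => ?_) h2
  have hE : exp (-(x ^ 2) / 2) = exp (-(2⁻¹:ℝ) * x ^ 2) := by ring_nf
  rw [hE, norm_mul, norm_pow, Real.norm_eq_abs, Real.norm_eq_abs, abs_of_pos (exp_pos _),
    ← Real.rpow_natCast |x| m]

lemma gauss_J_step {k : ℕ} (hk : k + 2 ≤ 4) :
    ∫ x : ℝ, x ^ (k + 2) * exp (-(x ^ 2) / 2)
      = (k + 1 : ℝ) * ∫ x : ℝ, x ^ k * exp (-(x ^ 2) / 2) := by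
  set F : ℝ → ℝ := fun x => x ^ (k + 1) * exp (-(x ^ 2) / 2) with hF
  set F' : ℝ → ℝ := fun x =>
    (k + 1 : ℝ) * (x ^ k * exp (-(x ^ 2) / 2)) - x ^ (k + 2) * exp (-(x ^ 2) / 2) with hF'
  have hderiv : ∀ x : ℝ, HasDerivAt F (F' x) x := by
    intro x
    have h := (hasDerivAt_pow (k + 1) x).mul (hasDerivAt_E x)
    refine h.congr_deriv ?_
    simp only [hF']
    push_cast; ring
  have hint : Integrable F' :=
    ((integ_pow_gauss (by omega)).const_mul _).sub (integ_pow_gauss hk)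
  have h1 : ∫ x in Iic (0:ℝ), F' x = F 0 - 0 :=
    integral_Iic_of_hasDerivAt_of_tendsto (hderiv 0).continuousAt.continuousWithinAt
      (fun x _ => hderiv x) hint.integrableOn (tendsto_F_bot (k + 1))
  have h2 : ∫ x in Ioi (0:ℝ), F' x = 0 - F 0 :=
    integral_Ioi_of_hasDerivAt_of_tendsto (hderiv 0).continuousAt.continuousWithinAt
      (fun x _ => hderiv x) hint.integrableOn (tendsto_F_top (k + 1))
  have h3 : ∫ x : ℝ, F' x = 0 := by
    rw [← intervalIntegral.integral_Iic_add_Ioi hint.integrableOn hint.integrableOn, h1, h2]; ring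
  rw [hF'] at h3
  rw [integral_sub ((integ_pow_gauss (by omega)).const_mul _) (integ_pow_gauss hk),
    integral_const_mul] at h3
  linarith

lemma gaussianPDFReal_eq (x : ℝ) :
    gaussianPDFReal 0 1 x = (Real.sqrt (2 * π))⁻¹ * exp (-(x ^ 2) / 2) := by
  rw [gaussianPDFReal]
  norm_num

lemma gaussianReal_eq_density :
    gaussianReal 0 1 = volume.withDensity
      (fun x => ((Real.toNNReal (gaussianPDFReal 0 1 x) : NNReal) : ENNReal)) := by
  rw [gaussianReal_of_var_ne_zero 0 one_ne_zero]
  rfl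

lemma gauss_integral_eq (f : ℝ → ℝ) :
    ∫ x, f x ∂(gaussianReal 0 1)
      = (Real.sqrt (2 * π))⁻¹ * ∫ x, f x * exp (-(x ^ 2) / 2) := by
  rw [gaussianReal_eq_density,
    integral_withDensity_eq_integral_smul ((measurable_gaussianPDFReal 0 1).real_toNNReal) f]
  have : ∀ x, (Real.toNNReal (gaussianPDFReal 0 1 x) : NNReal) • f x
      = (Real.sqrt (2 * π))⁻¹ * (f x * exp (-(x ^ 2) / 2)) := by
    intro x
    rw [NNReal.smul_def, smul_eq_mul, Real.coe_toNNReal _ (gaussianPDFReal_nonneg 0 1 x),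
      gaussianPDFReal_eq]
    ring
  simp_rw [this]
  rw [integral_const_mul]

lemma gauss_integrable_iff (f : ℝ → ℝ) :
    Integrable f (gaussianReal 0 1)
      ↔ Integrable (fun x => f x * exp (-(x ^ 2) / 2)) volume := by
  rw [gaussianReal_eq_density, integrable_withDensity_iff
    (by exact (measurable_gaussianPDFReal 0 1).real_toNNReal.coe_nnreal_ennreal)
    (ae_of_all _ fun x => ENNReal.coe_lt_top)]
  have h : ∀ x : ℝ, f x * ((Real.toNNReal (gaussianPDFReal 0 1 x) : NNReal) : ENNReal).toReal
      = (Real.sqrt (2 * π))⁻¹ * (f x * exp (-(x ^ 2) / 2)) := by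
    intro x
    rw [ENNReal.coe_toReal, Real.coe_toNNReal _ (gaussianPDFReal_nonneg 0 1 x),
      gaussianPDFReal_eq]
    ring
  simp_rw [h]
  rw [integrable_const_mul_iff]
  exact (isUnit_iff_ne_zero).2 (by positivity)

lemma gauss_integrable_pow {k : ℕ} (hk : k ≤ 4) :
    Integrable (fun x : ℝ => x ^ k) (gaussianReal 0 1) :=
  (gauss_integrable_iff _).2 (integ_pow_gauss hk)

def gmoment (k : ℕ) : ℝ := ∫ x : ℝ, x ^ k ∂(gaussianReal 0 1)

lemma sqrt_two_pi_pos : (0:ℝ) < Real.sqrt (2 * π) := by positivity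

lemma gmoment_zero : gmoment 0 = 1 := by
  rw [gmoment]
  simp

lemma gmoment_one : gmoment 1 = 0 := by
  rw [gmoment, gauss_integral_eq]
  have := gauss_J_odd (k := 1) (by decide) (integ_pow_gauss (by norm_num))
  simp_rw [pow_one] at this ⊢
  rw [this, mul_zero]

lemma gmoment_two : gmoment 2 = 1 := by
  rw [gmoment, gauss_integral_eq]
  have h := gauss_J_step (k := 0) (by norm_num)
  simp only [pow_zero, one_mul] at h
  rw [h, gauss_J0, show ((0:ℕ):ℝ) + 1 = 1 by norm_num, one_mul,
    inv_mul_cancel₀ (ne_of_gt sqrt_two_pi_pos)]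

lemma gmoment_three : gmoment 3 = 0 := by
  rw [gmoment, gauss_integral_eq]
  rw [gauss_J_odd (k := 3) (by decide) (integ_pow_gauss (by norm_num)), mul_zero]

lemma gmoment_four : gmoment 4 = 3 := by
  rw [gmoment, gauss_integral_eq]
  have h := gauss_J_step (k := 2) (by norm_num)
  have h2 := gauss_J_step (k := 0) (by norm_num)
  simp only [pow_zero, one_mul] at h2
  rw [h, h2, gauss_J0]
  have hs := sqrt_two_pi_pos
  push_cast
  field_simp
  ring

variable {p : ℕ}

abbrev gammaP (p : ℕ) : Measure (Fin p → ℝ) := Measure.pi fun _ : Fin p => gaussianReal 0 1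

instance : IsProbabilityMeasure (gammaP p) := by unfold gammaP; infer_instance

/-- indicator exponent -/
def dd (α i : Fin p) : ℕ := if α = i then 1 else 0

lemma dd_le_one (α i : Fin p) : dd α i ≤ 1 := by unfold dd; split <;> omega

lemma prod_pow_dd (x : Fin p → ℝ) (α : Fin p) : (∏ i, x i ^ dd α i) = x α := by
  rw [show (fun i => x i ^ dd α i) = fun i => if α = i then x i else 1 from
    funext fun i => by unfold dd; split <;> simp]
  simp

lemma prod_pow_add (x : Fin p → ℝ) (m1 m2 : Fin p → ℕ) :
    (∏ i, x i ^ (m1 i + m2 i)) = (∏ i, x i ^ m1 i) * (∏ i, x i ^ m2 i) := by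
  simp [pow_add, Finset.prod_mul_distrib]

lemma int_mono (ms : Fin p → ℕ) (h : ∀ i, ms i ≤ 4) :
    Integrable (fun x : Fin p → ℝ => ∏ i, x i ^ ms i) (gammaP p) :=
  pi_integrable_prod _ (fun i => gauss_integrable_pow (h i))

lemma integral_mono (ms : Fin p → ℕ) :
    ∫ x : Fin p → ℝ, (∏ i, x i ^ ms i) ∂(gammaP p) = ∏ i, gmoment (ms i) :=
  pi_integral_prod _ _

/-- Kronecker delta -/
def D (a b : Fin p) : ℝ := if a = b then 1 else 0

lemma mono2_eq (x : Fin p → ℝ) (α β : Fin p) :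
    x α * x β = ∏ i, x i ^ (dd α i + dd β i) := by
  rw [prod_pow_add, prod_pow_dd, prod_pow_dd]

lemma mono4_eq (x : Fin p → ℝ) (α β γ δ : Fin p) :
    x α * x β * (x γ * x δ) = ∏ i, x i ^ (dd α i + dd β i + (dd γ i + dd δ i)) := by
  simp_rw [prod_pow_add, prod_pow_dd]

lemma int_mono1 (α : Fin p) : Integrable (fun x : Fin p → ℝ => x α) (gammaP p) := by
  have := int_mono (fun i => dd α i) (fun i => (dd_le_one α i).trans (by norm_num))
  simpa [prod_pow_dd] using this

lemma int_mono2 (α β : Fin p) :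
    Integrable (fun x : Fin p → ℝ => x α * x β) (gammaP p) := by
  have := int_mono (fun i => dd α i + dd β i)
    (fun i => by show dd α i + dd β i ≤ 4
                 have := dd_le_one α i; have := dd_le_one β i; omega)
  simp_rw [← mono2_eq] at this
  exact this

lemma int_mono3 (α β γ : Fin p) :
    Integrable (fun x : Fin p → ℝ => x α * x β * x γ) (gammaP p) := by
  have := int_mono (fun i => dd α i + dd β i + dd γ i)
    (fun i => by show dd α i + dd β i + dd γ i ≤ 4
                 have := dd_le_one α i; have := dd_le_one β i; have := dd_le_one γ i; omega)
  simp_rw [prod_pow_add, prod_pow_dd] at this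
  exact this

lemma int_mono4 (α β γ δ : Fin p) :
    Integrable (fun x : Fin p → ℝ => x α * x β * (x γ * x δ)) (gammaP p) := by
  have := int_mono (fun i => dd α i + dd β i + (dd γ i + dd δ i))
    (fun i => by show dd α i + dd β i + (dd γ i + dd δ i) ≤ 4
                 have := dd_le_one α i; have := dd_le_one β i; have := dd_le_one γ i;
                 have := dd_le_one δ i; omega)
  simp_rw [prod_pow_add, prod_pow_dd] at this
  exact this

lemma E1 (α : Fin p) : ∫ x : Fin p → ℝ, x α ∂(gammaP p) = 0 := by
  have h := integral_mono (fun i => dd α i)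
  simp_rw [prod_pow_dd] at h
  rw [h]
  refine Finset.prod_eq_zero (Finset.mem_univ α) ?_
  simp [dd, gmoment_one]

lemma E2 (α β : Fin p) :
    ∫ x : Fin p → ℝ, x α * x β ∂(gammaP p) = D α β := by
  have h := integral_mono (fun i => dd α i + dd β i)
  simp_rw [← mono2_eq] at h
  rw [h, D]
  by_cases hab : α = β
  · subst hab
    simp only [if_true]
    refine Finset.prod_eq_one fun i _ => ?_
    by_cases h : α = i <;> simp [dd, h, gmoment_two, gmoment_zero]
  · rw [if_neg hab]
    refine Finset.prod_eq_zero (Finset.mem_univ α) ?_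
    simp [dd, Ne.symm hab, hab, gmoment_one]

lemma E4 (α β γ δ : Fin p) :
    ∫ x : Fin p → ℝ, x α * x β * (x γ * x δ) ∂(gammaP p)
      = D α β * D γ δ + D α γ * D β δ + D α δ * D β γ := by
  have h := integral_mono (fun i => dd α i + dd β i + (dd γ i + dd δ i))
  simp_rw [← mono4_eq] at h
  rw [h]
  clear h
  by_cases h1 : α = β
  · subst h1
    by_cases h2 : γ = δ
    · subst h2
      by_cases h3 : α = γ
      · subst h3
        rw [Finset.prod_eq_single α
          (fun i _ hne => by simp [dd, Ne.symm hne, gmoment_zero])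
          (by simp)]
        simp [dd, gmoment_four, D]
        norm_num
      · rw [Finset.prod_eq_one fun i _ => ?_]
        · simp [D, h3, if_neg]
        · by_cases hi1 : α = i
          · subst hi1; simp [dd, Ne.symm h3, h3, gmoment_two]
          · by_cases hi2 : γ = i
            · subst hi2; simp [dd, Ne.symm hi1, hi1, gmoment_two]
            · simp [dd, hi1, hi2, gmoment_zero]
    · -- γ ≠ δ : count at δ is odd (1 or 3)
      rw [Finset.prod_eq_zero (Finset.mem_univ δ) ?_]
      · have hgd : D γ δ = 0 := by simp [D, h2]
        have : D α γ * D α δ + D α δ * D α γ = 0 := by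
          by_cases hag : α = γ
          · have : α ≠ δ := fun hcon => h2 (hag ▸ hcon)
            simp [D, this]
          · simp [D, hag]
        rw [hgd]
        linarith [this]
      · by_cases had : α = δ
        · subst had
          have hga : γ ≠ α := fun hcon => h2 hcon
          simp [dd, hga, Ne.symm hga, gmoment_three]
        · have hdnb : δ ≠ α := fun hcon => had hcon.symm
          have hgd : γ ≠ δ := h2
          simp [dd, had, hdnb, fun hcon => h2 (hcon : γ = δ), gmoment_one]
  · by_cases h2 : α = γ
    · subst h2
      by_cases h3 : β = δ
      · subst h3
        rw [Finset.prod_eq_one fun i _ => ?_]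
        · simp [D, h1, Ne.symm h1]
        · by_cases hi1 : α = i
          · subst hi1; simp [dd, h1, Ne.symm h1, gmoment_two]
          · by_cases hi2 : β = i
            · subst hi2; simp [dd, hi1, Ne.symm hi1, gmoment_two]
            · simp [dd, hi1, hi2, gmoment_zero]
      · rw [Finset.prod_eq_zero (Finset.mem_univ β) ?_]
        · simp [D, h1, Ne.symm h1, h3]
        · have hdb : δ ≠ β := fun hcon => h3 hcon.symm
          simp [dd, Ne.symm h1, h1, h3, hdb, gmoment_one]
    · by_cases h3 : α = δ
      · subst h3
        by_cases h4 : β = γ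
        · subst h4
          rw [Finset.prod_eq_one fun i _ => ?_]
          · simp [D, h1, h2, Ne.symm h1]
          · by_cases hi1 : α = i
            · subst hi1; simp [dd, h1, h2, Ne.symm h1, Ne.symm h2, gmoment_two]
            · by_cases hi2 : β = i
              · subst hi2; simp [dd, hi1, Ne.symm hi1, gmoment_two]
              · simp [dd, hi1, hi2, gmoment_zero]
        · rw [Finset.prod_eq_zero (Finset.mem_univ β) ?_]
          · simp [D, h1, h2, Ne.symm h1, h4]
          · have hgb : γ ≠ β := fun hcon => h4 hcon.symm
            simp [dd, Ne.symm h1, h1, h4, hgb, gmoment_one]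
      · rw [Finset.prod_eq_zero (Finset.mem_univ α) ?_]
        · simp [D, h1, h2, h3]
        · have hga : γ ≠ α := fun hcon => h2 hcon.symm
          have hda : δ ≠ α := fun hcon => h3 hcon.symm
          simp [dd, Ne.symm h1, h1, h2, h3, hga, hda, gmoment_one]

variable {p : ℕ} (u v w y : Fin p → ℝ)

lemma dot_exp1 (x : Fin p → ℝ) : u ⬝ᵥ x = ∑ α, u α * x α := rfl

lemma dot_exp2 (x : Fin p → ℝ) :
    (u ⬝ᵥ x) * (v ⬝ᵥ x) = ∑ α, ∑ β, (u α * v β) * (x α * x β) := by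
  rw [dot_exp1, dot_exp1, Finset.sum_mul_sum]
  exact Finset.sum_congr rfl fun α _ => Finset.sum_congr rfl fun β _ => by ring

lemma dot_exp3 (x : Fin p → ℝ) :
    (u ⬝ᵥ x) * (v ⬝ᵥ x) * (w ⬝ᵥ x)
      = ∑ α, ∑ β, ∑ γ, (u α * v β * w γ) * (x α * x β * x γ) := by
  rw [dot_exp2, dot_exp1, Finset.sum_mul]
  refine Finset.sum_congr rfl fun α _ => ?_
  rw [Finset.sum_mul]
  refine Finset.sum_congr rfl fun β _ => ?_
  rw [Finset.mul_sum]
  exact Finset.sum_congr rfl fun γ _ => by ring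

lemma dot_exp4 (x : Fin p → ℝ) :
    (u ⬝ᵥ x) * (v ⬝ᵥ x) * ((w ⬝ᵥ x) * (y ⬝ᵥ x))
      = ∑ α, ∑ γ, ∑ β, ∑ δ, (u α * v β * w γ * y δ) * (x α * x β * (x γ * x δ)) := by
  rw [dot_exp2 u v, dot_exp2 w y, Finset.sum_mul_sum]
  refine Finset.sum_congr rfl fun α _ => ?_
  refine Finset.sum_congr rfl fun γ _ => ?_
  rw [Finset.sum_mul_sum]
  refine Finset.sum_congr rfl fun β _ => ?_
  refine Finset.sum_congr rfl fun δ _ => by ring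

lemma IV1 : Integrable (fun x : Fin p → ℝ => u ⬝ᵥ x) (gammaP p) := by
  simp_rw [dot_exp1]
  exact integrable_finset_sum _ fun α _ => (int_mono1 α).const_mul _

lemma IV2 : Integrable (fun x : Fin p → ℝ => (u ⬝ᵥ x) * (v ⬝ᵥ x)) (gammaP p) := by
  simp_rw [dot_exp2]
  exact integrable_finset_sum _ fun α _ =>
    integrable_finset_sum _ fun β _ => (int_mono2 α β).const_mul _

lemma IV3 : Integrable (fun x : Fin p → ℝ => (u ⬝ᵥ x) * (v ⬝ᵥ x) * (w ⬝ᵥ x)) (gammaP p) := by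
  simp_rw [dot_exp3]
  exact integrable_finset_sum _ fun α _ => integrable_finset_sum _ fun β _ =>
    integrable_finset_sum _ fun γ _ => (int_mono3 α β γ).const_mul _

lemma IV4 : Integrable (fun x : Fin p → ℝ =>
    (u ⬝ᵥ x) * (v ⬝ᵥ x) * ((w ⬝ᵥ x) * (y ⬝ᵥ x))) (gammaP p) := by
  simp_rw [dot_exp4]
  exact integrable_finset_sum _ fun α _ => integrable_finset_sum _ fun γ _ =>
    integrable_finset_sum _ fun β _ =>
      integrable_finset_sum _ fun δ _ => (int_mono4 α β γ δ).const_mul _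

lemma MV1 : ∫ x : Fin p → ℝ, u ⬝ᵥ x ∂(gammaP p) = 0 := by
  simp_rw [dot_exp1]
  rw [integral_finset_sum _ fun α _ => (int_mono1 α).const_mul _]
  simp [integral_const_mul, E1]

lemma MV2 : ∫ x : Fin p → ℝ, (u ⬝ᵥ x) * (v ⬝ᵥ x) ∂(gammaP p) = u ⬝ᵥ v := by
  simp_rw [dot_exp2]
  rw [integral_finset_sum _ fun α _ =>
    integrable_finset_sum _ fun β _ => (int_mono2 α β).const_mul _]
  have : ∀ α : Fin p, ∫ x : Fin p → ℝ, (∑ β, (u α * v β) * (x α * x β)) ∂(gammaP p)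
      = ∑ β, (u α * v β) * D α β := by
    intro α
    rw [integral_finset_sum _ fun β _ => (int_mono2 α β).const_mul _]
    exact Finset.sum_congr rfl fun β _ => by rw [integral_const_mul, E2]
  simp_rw [this]
  simp [D, mul_ite, Finset.sum_ite_eq, dotProduct]

lemma MV4 : ∫ x : Fin p → ℝ, (u ⬝ᵥ x) * (v ⬝ᵥ x) * ((u ⬝ᵥ x) * (v ⬝ᵥ x)) ∂(gammaP p)
    = (u ⬝ᵥ u) * (v ⬝ᵥ v) + 2 * (u ⬝ᵥ v) ^ 2 := by
  simp_rw [dot_exp4]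
  rw [integral_finset_sum _ fun α _ => integrable_finset_sum _ fun γ _ =>
    integrable_finset_sum _ fun β _ =>
      integrable_finset_sum _ fun δ _ => (int_mono4 α β γ δ).const_mul _]
  have h1 : ∀ α : Fin p,
      ∫ x : Fin p → ℝ, (∑ γ, ∑ β, ∑ δ, (u α * v β * u γ * v δ) * (x α * x β * (x γ * x δ)))
        ∂(gammaP p)
      = ∑ γ, ∑ β, ∑ δ, (u α * v β * u γ * v δ)
          * (D α β * D γ δ + D α γ * D β δ + D α δ * D β γ) := by
    intro α
    rw [integral_finset_sum _ fun γ _ => integrable_finset_sum _ fun β _ =>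
      integrable_finset_sum _ fun δ _ => (int_mono4 α β γ δ).const_mul _]
    refine Finset.sum_congr rfl fun γ _ => ?_
    rw [integral_finset_sum _ fun β _ =>
      integrable_finset_sum _ fun δ _ => (int_mono4 α β γ δ).const_mul _]
    refine Finset.sum_congr rfl fun β _ => ?_
    rw [integral_finset_sum _ fun δ _ => (int_mono4 α β γ δ).const_mul _]
    exact Finset.sum_congr rfl fun δ _ => by rw [integral_const_mul, E4]
  simp_rw [h1]
  have hA : ∑ α : Fin p, ∑ γ : Fin p, ∑ β : Fin p, ∑ δ : Fin p,
      (u α * v β * u γ * v δ) * (D α β * D γ δ) = (u ⬝ᵥ v) * (u ⬝ᵥ v) := by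
    simp only [D, mul_ite, ite_mul, mul_one, one_mul, mul_zero, zero_mul,
      Finset.sum_ite_eq, Finset.sum_ite_eq', Finset.sum_ite_irrel, Finset.sum_const_zero, Finset.mem_univ, if_true]
    rw [dotProduct, Finset.sum_mul_sum]
    exact Finset.sum_congr rfl fun α _ => Finset.sum_congr rfl fun γ _ => by ring
  have hB : ∑ α : Fin p, ∑ γ : Fin p, ∑ β : Fin p, ∑ δ : Fin p,
      (u α * v β * u γ * v δ) * (D α γ * D β δ) = (u ⬝ᵥ u) * (v ⬝ᵥ v) := by
    simp only [D, mul_ite, ite_mul, mul_one, one_mul, mul_zero, zero_mul,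
      Finset.sum_ite_eq, Finset.sum_ite_eq', Finset.sum_ite_irrel, Finset.sum_const_zero, Finset.mem_univ, if_true]
    rw [dotProduct, dotProduct, Finset.sum_mul_sum]
    exact Finset.sum_congr rfl fun α _ => Finset.sum_congr rfl fun β _ => by ring
  have hC : ∑ α : Fin p, ∑ γ : Fin p, ∑ β : Fin p, ∑ δ : Fin p,
      (u α * v β * u γ * v δ) * (D α δ * D β γ) = (u ⬝ᵥ v) * (u ⬝ᵥ v) := by
    simp only [D, mul_ite, ite_mul, mul_one, one_mul, mul_zero, zero_mul,
      Finset.sum_ite_eq, Finset.sum_ite_eq', Finset.sum_ite_irrel, Finset.sum_const_zero, Finset.mem_univ, if_true]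
    rw [dotProduct, Finset.sum_mul_sum]
    exact Finset.sum_congr rfl fun α _ => Finset.sum_congr rfl fun γ _ => by ring
  calc ∑ α : Fin p, ∑ γ : Fin p, ∑ β : Fin p, ∑ δ : Fin p,
      (u α * v β * u γ * v δ) * (D α β * D γ δ + D α γ * D β δ + D α δ * D β γ)
      = (∑ α : Fin p, ∑ γ : Fin p, ∑ β : Fin p, ∑ δ : Fin p,
          (u α * v β * u γ * v δ) * (D α β * D γ δ))
        + (∑ α : Fin p, ∑ γ : Fin p, ∑ β : Fin p, ∑ δ : Fin p,
          (u α * v β * u γ * v δ) * (D α γ * D β δ))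
        + (∑ α : Fin p, ∑ γ : Fin p, ∑ β : Fin p, ∑ δ : Fin p,
          (u α * v β * u γ * v δ) * (D α δ * D β γ)) := by
        simp only [mul_add, Finset.sum_add_distrib]
    _ = (u ⬝ᵥ u) * (v ⬝ᵥ v) + 2 * (u ⬝ᵥ v) ^ 2 := by
        rw [hA, hB, hC]; ring

abbrev nuM (n p : ℕ) : Measure (Fin n → Fin p → ℝ) := Measure.pi fun _ : Fin n => gammaP p
instance {n p : ℕ} : IsProbabilityMeasure (nuM n p) := by unfold nuM; infer_instance

variable {n p : ℕ} {f g : (Fin p → ℝ) → ℝ}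

lemma row1_prod (i : Fin n) (f : (Fin p → ℝ) → ℝ) (z : Fin n → Fin p → ℝ) :
    (∏ m, (if m = i then f else fun _ => 1) (z m)) = f (z i) := by
  rw [Finset.prod_eq_single i (fun m _ hm => by simp [hm]) (by simp)]
  simp

lemma row2_prod {i k : Fin n} (hik : i ≠ k) (f g : (Fin p → ℝ) → ℝ)
    (z : Fin n → Fin p → ℝ) :
    (∏ m, (if m = i then f else if m = k then g else fun _ => 1) (z m))
      = f (z i) * g (z k) := by
  have hsplit : ∀ m, (if m = i then f else if m = k then g else fun _ => 1) (z m)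
      = (if m = i then f else fun _ => 1) (z m) * (if m = k then g else fun _ => 1) (z m) := by
    intro m
    by_cases h1 : m = i
    · subst h1
      simp [Ne.symm, hik]
    · by_cases h2 : m = k <;> simp [h1, h2, Ne.symm hik]
  simp_rw [hsplit]
  rw [Finset.prod_mul_distrib, row1_prod, row1_prod]

lemma R1int (i : Fin n) (hf : Integrable f (gammaP p)) :
    Integrable (fun z : Fin n → Fin p → ℝ => f (z i)) (nuM n p) := by
  have h := pi_integrable_prod (fun _ : Fin n => gammaP p)
    (f := fun m => if m = i then f else fun _ => 1)
    (fun m => by split <;> simp_all [integrable_const])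
  simp_rw [row1_prod] at h
  exact h

lemma R1val (i : Fin n) (f : (Fin p → ℝ) → ℝ) :
    ∫ z : Fin n → Fin p → ℝ, f (z i) ∂(nuM n p) = ∫ x, f x ∂(gammaP p) := by
  have h := pi_integral_prod (fun _ : Fin n => gammaP p)
    (fun m => if m = i then f else fun _ => 1)
  simp_rw [row1_prod] at h
  rw [h, Finset.prod_eq_single i (fun m _ hm => by simp [hm]) (by simp)]
  simp

lemma R2int {i k : Fin n} (hik : i ≠ k) (hf : Integrable f (gammaP p))
    (hg : Integrable g (gammaP p)) :
    Integrable (fun z : Fin n → Fin p → ℝ => f (z i) * g (z k)) (nuM n p) := by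
  have h := pi_integrable_prod (fun _ : Fin n => gammaP p)
    (f := fun m => if m = i then f else if m = k then g else fun _ => 1)
    (fun m => by
                 split
                 · exact hf
                 · split
                   · exact hg
                   · simp [integrable_const])
  simp_rw [row2_prod hik] at h
  exact h

lemma R2val {i k : Fin n} (hik : i ≠ k) (f g : (Fin p → ℝ) → ℝ) :
    ∫ z : Fin n → Fin p → ℝ, f (z i) * g (z k) ∂(nuM n p)
      = (∫ x, f x ∂(gammaP p)) * ∫ x, g x ∂(gammaP p) := by
  have h := pi_integral_prod (fun _ : Fin n => gammaP p)
    (fun m => if m = i then f else if m = k then g else fun _ => 1)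
  simp_rw [row2_prod hik] at h
  rw [h]
  have : ∀ m : Fin n, (∫ x, (if m = i then f else if m = k then g else fun _ => 1) x
      ∂(gammaP p)) = if m = i then ∫ x, f x ∂(gammaP p)
        else if m = k then ∫ x, g x ∂(gammaP p) else 1 := by
    intro m
    split
    · rfl
    · split
      · rfl
      · simp
  simp_rw [this]
  have hsplit : ∀ m : Fin n, (if m = i then ∫ x, f x ∂(gammaP p)
      else if m = k then ∫ x, g x ∂(gammaP p) else 1)
      = (if m = i then ∫ x, f x ∂(gammaP p) else 1)
        * (if m = k then ∫ x, g x ∂(gammaP p) else 1) := by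
    intro m
    by_cases h1 : m = i
    · subst h1; simp [Ne.symm, hik]
    · by_cases h2 : m = k <;> simp [h1, h2, Ne.symm hik]
  simp_rw [hsplit]
  rw [Finset.prod_mul_distrib,
    Finset.prod_eq_single i (fun m _ hm => by simp [hm]) (by simp),
    Finset.prod_eq_single k (fun m _ hm => by simp [hm]) (by simp)]
  simp

/-- Variance of a coordinate of the projected oracle estimator for a
Gaussian design: with rows of `X` i.i.d. `N(0, Σ)` (encoded via the positive
semidefinite square root of `Σ`), i.i.d. noise of mean `0` and variance `σ²`
independent of `X`, and `Aβ* = 0`, the estimator `β̂_{Σ,P} := (1/n)·P_{A⊥}Σ⁻¹Xᵀy`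
satisfies
`Var(β̂_{Σ,P,j}) = (1/n)(β*ⱼ)² + ((σ² + ‖Σ^{1/2}β*‖²)/n)·eⱼᵀP_{A⊥}Σ⁻¹P_{A⊥}eⱼ`. -/
theorem stmt18 {n p q : ℕ} (hqp : q < p)
    {Ω : Type} [MeasurableSpace Ω] (μ : Measure Ω) [IsProbabilityMeasure μ]
    (Sg : Matrix (Fin p) (Fin p) ℝ) (hSg : Sg.PosDef)
    (X : Ω → Fin n → Fin p → ℝ) (hXmeas : Measurable X)
    (hXlaw : Measure.map X μ =
      Measure.map (fun z : Fin n → Fin p → ℝ => fun i => hSg.posSemidef.sqrt *ᵥ z i)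
        (Measure.pi fun _ : Fin n => Measure.pi fun _ : Fin p => gaussianReal 0 1))
    (σ : ℝ)
    (ε : Ω → Fin n → ℝ) (hεmeas : Measurable ε)
    (hiid : iIndepFun (fun i ω => ε ω i) μ)
    (hident : ∀ i i', Measure.map (fun ω => ε ω i) μ = Measure.map (fun ω => ε ω i') μ)
    (hεmean : ∀ i, ∫ ω, ε ω i ∂μ = 0)
    (hεvar : ∀ i, ∫ ω, (ε ω i) ^ 2 ∂μ = σ ^ 2)
    (hεint : ∀ i, Integrable (fun ω => (ε ω i) ^ 2) μ)
    (hindep : IndepFun X ε μ)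
    (A : Matrix (Fin q) (Fin p) ℝ) (hA : A.rank = q)
    (βs : Fin p → ℝ) (hc : A *ᵥ βs = 0) (j : Fin p) :
    let PAperp := (1 : Matrix (Fin p) (Fin p) ℝ) - Aᵀ * (A * Aᵀ)⁻¹ * A
    rvVar μ (fun ω =>
        ((n : ℝ)⁻¹ • ((PAperp * Sg⁻¹ * (Matrix.of (X ω))ᵀ) *ᵥ
          (Matrix.of (X ω) *ᵥ βs + ε ω))) j) =
      (n : ℝ)⁻¹ * (βs j) ^ 2 +
        (σ ^ 2 + sqNorm (hSg.posSemidef.sqrt *ᵥ βs)) / n *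
          (PAperp * Sg⁻¹ * PAperp) j j := by
  intro PAperp
  have hPdef : PAperp = (1 : Matrix (Fin p) (Fin p) ℝ) - Aᵀ * (A * Aᵀ)⁻¹ * A := rfl
  rcases Nat.eq_zero_or_pos n with hn | hn
  · subst hn
    simp [rvVar]
  have hn0 : (n : ℝ) ≠ 0 := Nat.cast_ne_zero.mpr hn.ne'
  set S := hSg.posSemidef.sqrt with hS
  have hSsymm : Sᵀ = S := by
    exact psd_sqrt_transpose hSg.posSemidef
  have hSS : S * S = Sg := psd_sqrt_mul_self hSg.posSemidef
  have hPsym : PAperpᵀ = PAperp := by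
    rw [hPdef]
    simp [transpose_sub, transpose_mul, transpose_nonsing_inv, Matrix.mul_assoc]
  set Cm : Matrix (Fin p) (Fin p) ℝ := PAperp * Sg⁻¹ with hCm
  set c : Fin p → ℝ := fun l => Cm j l with hcv
  set a : Fin p → ℝ := S *ᵥ c with ha
  set t : Fin p → ℝ := S *ᵥ βs with ht
  set m : ℝ := a ⬝ᵥ t with hmdef
  have hdotS : ∀ v x : Fin p → ℝ, v ⬝ᵥ (S *ᵥ x) = (S *ᵥ v) ⬝ᵥ x := by
    intro v x
    rw [dotProduct_mulVec]
    congr 1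
    rw [← mulVec_transpose, hSsymm]
  -- matrix algebra
  have hCSg : Cm * Sg = PAperp := by
    rw [hCm, Matrix.mul_assoc, Matrix.nonsing_inv_mul Sg (isUnit_iff_ne_zero.mpr hSg.det_pos.ne'),
      Matrix.mul_one]
  have hPβ : PAperp *ᵥ βs = βs := by
    rw [hPdef, sub_mulVec, one_mulVec, ← Matrix.mulVec_mulVec, ← Matrix.mulVec_mulVec, hc,
      mulVec_zero, mulVec_zero, sub_zero]
  have hdot_c : ∀ v : Fin p → ℝ, c ⬝ᵥ (Sg *ᵥ v) = (PAperp *ᵥ v) j := by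
    intro v
    have h1 : c ⬝ᵥ (Sg *ᵥ v) = (Cm *ᵥ (Sg *ᵥ v)) j := rfl
    rw [h1, Matrix.mulVec_mulVec, hCSg]
  have hsq : ∀ v w : Fin p → ℝ, (S *ᵥ v) ⬝ᵥ (S *ᵥ w) = v ⬝ᵥ (Sg *ᵥ w) := by
    intro v w
    rw [← hdotS v (S *ᵥ w), Matrix.mulVec_mulVec, hSS]
  have hm : m = βs j := by
    rw [hmdef, ha, ht, hsq, hdot_c, hPβ]
  have haa : a ⬝ᵥ a = (PAperp * Sg⁻¹ * PAperp) j j := by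
    rw [ha, hsq, hdot_c]
    have h2 : (PAperp * Sg⁻¹ * PAperp) j j = ∑ l, Cm j l * PAperp l j := by
      rw [← hCm, Matrix.mul_apply]
    rw [h2, Matrix.mulVec]
    rw [dotProduct]
    refine Finset.sum_congr rfl fun l _ => ?_
    have h3 : PAperp l j = PAperp j l := by
      have := congrFun (congrFun hPsym j) l
      simpa [Matrix.transpose_apply] using this
    rw [h3, hcv]
    ring
  have htt : t ⬝ᵥ t = sqNorm (S *ᵥ βs) := by
    rw [ht, sqNorm, dotProduct]
    exact Finset.sum_congr rfl fun l _ => (sq ((S *ᵥ βs) l)).symm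
  -- the map L and transfer lemmas
  set L : (Fin n → Fin p → ℝ) → (Fin n → Fin p → ℝ) := fun z => fun i => S *ᵥ z i with hL
  have hLmeas : Measurable L := by
    refine measurable_pi_lambda _ fun i => measurable_pi_lambda _ fun α => ?_
    show Measurable fun z : Fin n → Fin p → ℝ => (S *ᵥ z i) α
    simp only [Matrix.mulVec, dotProduct]
    exact Finset.measurable_sum _ fun l _ => by fun_prop
  have hXlaw' : Measure.map X μ = Measure.map L (nuM n p) := hXlaw
  have hTval : ∀ φ : (Fin n → Fin p → ℝ) → ℝ, Measurable φ →
      ∫ ω, φ (X ω) ∂μ = ∫ z, φ (L z) ∂(nuM n p) := by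
    intro φ hφ
    rw [← integral_map hXmeas.aemeasurable
      (by rw [hXlaw']; exact hφ.aestronglyMeasurable), hXlaw',
      integral_map hLmeas.aemeasurable hφ.aestronglyMeasurable]
  have hTint : ∀ φ : (Fin n → Fin p → ℝ) → ℝ, Measurable φ →
      Integrable (fun z => φ (L z)) (nuM n p) → Integrable (fun ω => φ (X ω)) μ := by
    intro φ hφ h
    have h1 : Integrable φ (Measure.map X μ) := by
      rw [hXlaw']
      exact (integrable_map_measure hφ.aestronglyMeasurable hLmeas.aemeasurable).2 h
    exact (integrable_map_measure (by rw [hXlaw']; exact hφ.aestronglyMeasurable)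
      hXmeas.aemeasurable).1 h1
  have hmdot : ∀ (v : Fin p → ℝ) (i : Fin n),
      Measurable (fun z : Fin n → Fin p → ℝ => v ⬝ᵥ z i) := by
    intro v i
    simp only [dotProduct]
    exact Finset.measurable_sum _ fun l _ => by fun_prop
  have hLdot : ∀ (v : Fin p → ℝ) (i : Fin n) (z : Fin n → Fin p → ℝ),
      v ⬝ᵥ (L z) i = (S *ᵥ v) ⬝ᵥ z i := by
    intro v i z
    rw [hL]
    exact hdotS v (z i)
  -- random variables
  set Q : Fin n → Ω → ℝ := fun i ω => (c ⬝ᵥ X ω i) * (βs ⬝ᵥ X ω i) with hQ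
  set Rr : Fin n → Ω → ℝ := fun i ω => (c ⬝ᵥ X ω i) * ε ω i with hRr
  -- integrability of noise
  have hintε : ∀ i, Integrable (fun ω => ε ω i) μ := by
    intro i
    refine ((hεint i).add (integrable_const 1)).mono'
      ((measurable_pi_apply i).comp hεmeas).aestronglyMeasurable ?_
    refine ae_of_all _ fun ω => ?_
    simp only [Pi.add_apply, Real.norm_eq_abs]
    nlinarith [abs_nonneg (ε ω i), sq_abs (ε ω i), sq_nonneg (|ε ω i| - 1)]
  -- Q facts
  have hQmeas : ∀ i, Measurable fun z : Fin n → Fin p → ℝ => (c ⬝ᵥ z i) * (βs ⬝ᵥ z i) :=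
    fun i => (hmdot c i).mul (hmdot βs i)
  have hIntQ : ∀ i, Integrable (Q i) μ := by
    intro i
    refine hTint _ (hQmeas i) ?_
    simp_rw [hLdot]
    exact R1int i (IV2 a t)
  have hEQ : ∀ i, ∫ ω, Q i ω ∂μ = m := by
    intro i
    rw [hQ]
    rw [hTval _ (hQmeas i)]
    simp_rw [hLdot]
    rw [R1val i fun x => (a ⬝ᵥ x) * (t ⬝ᵥ x), MV2, hmdef]
  -- cX facts
  have hIntcX : ∀ (v : Fin p → ℝ) (i : Fin n), Integrable (fun ω => v ⬝ᵥ X ω i) μ := by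
    intro v i
    refine hTint _ (hmdot v i) ?_
    simp_rw [hLdot]
    exact R1int i (IV1 _)
  have hIndep_cX_ε : ∀ (i k : Fin n), IndepFun (fun ω => c ⬝ᵥ X ω i) (fun ω => ε ω k) μ := by
    intro i k
    exact hindep.comp (hmdot c i) (measurable_pi_apply k)
  have hIntR : ∀ i, Integrable (Rr i) μ := by
    intro i
    have := (hIndep_cX_ε i i).integrable_mul (hIntcX c i) (hintε i)
    exact this
  have hER : ∀ i, ∫ ω, Rr i ω ∂μ = 0 := by
    intro i
    have h := (hIndep_cX_ε i i).integral_mul_eq_mul_integral (hIntcX c i).aestronglyMeasurable (hintε i).aestronglyMeasurable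
    have h2 : ∫ ω, Rr i ω ∂μ = (∫ ω, c ⬝ᵥ X ω i ∂μ) * ∫ ω, ε ω i ∂μ := h
    rw [h2, hεmean i, mul_zero]
  -- QQ facts
  have hQQmeas : ∀ i k, Measurable fun z : Fin n → Fin p → ℝ =>
      ((c ⬝ᵥ z i) * (βs ⬝ᵥ z i)) * ((c ⬝ᵥ z k) * (βs ⬝ᵥ z k)) :=
    fun i k => (hQmeas i).mul (hQmeas k)
  have hIntQQ : ∀ i k, Integrable (fun ω => Q i ω * Q k ω) μ := by
    intro i k
    refine hTint _ (hQQmeas i k) ?_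
    simp_rw [hLdot]
    by_cases hik : i = k
    · subst hik
      exact R1int i (IV4 a t a t)
    · exact R2int hik (IV2 a t) (IV2 a t)
  have hEQQ : ∀ i k, ∫ ω, Q i ω * Q k ω ∂μ
      = if i = k then (a ⬝ᵥ a) * (t ⬝ᵥ t) + 2 * m ^ 2 else m * m := by
    intro i k
    rw [hQ]
    rw [hTval _ (hQQmeas i k)]
    simp_rw [hLdot]
    by_cases hik : i = k
    · subst hik
      rw [if_pos rfl, R1val i fun x => (a ⬝ᵥ x) * (t ⬝ᵥ x) * ((a ⬝ᵥ x) * (t ⬝ᵥ x)), MV4, hmdef]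
    · rw [if_neg hik, R2val hik (fun x => (a ⬝ᵥ x) * (t ⬝ᵥ x)) (fun x => (a ⬝ᵥ x) * (t ⬝ᵥ x)),
        MV2, hmdef]
  -- QR facts
  have hQRmeas : ∀ i k, Measurable fun z : Fin n → Fin p → ℝ =>
      ((c ⬝ᵥ z i) * (βs ⬝ᵥ z i)) * (c ⬝ᵥ z k) :=
    fun i k => (hQmeas i).mul (hmdot c k)
  have hIntQcX : ∀ i k, Integrable (fun ω => Q i ω * (c ⬝ᵥ X ω k)) μ := by
    intro i k
    refine hTint _ (hQRmeas i k) ?_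
    simp_rw [hLdot]
    by_cases hik : i = k
    · subst hik
      exact R1int i (IV3 a t a)
    · exact R2int hik (IV2 a t) (IV1 a)
  have hIndepQR : ∀ i k, IndepFun (fun ω => Q i ω * (c ⬝ᵥ X ω k)) (fun ω => ε ω k) μ := by
    intro i k
    exact hindep.comp (hQRmeas i k) (measurable_pi_apply k)
  have hIntQR : ∀ i k, Integrable (fun ω => Q i ω * Rr k ω) μ := by
    intro i k
    have h := (hIndepQR i k).integrable_mul (hIntQcX i k) (hintε k)
    have h2 : (fun ω => Q i ω * (c ⬝ᵥ X ω k)) * (fun ω => ε ω k)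
        = fun ω => Q i ω * Rr k ω := by
      funext ω
      simp only [Pi.mul_apply, hRr]
      ring
    rwa [h2] at h
  have hEQR : ∀ i k, ∫ ω, Q i ω * Rr k ω ∂μ = 0 := by
    intro i k
    have h := (hIndepQR i k).integral_mul_eq_mul_integral (hIntQcX i k).aestronglyMeasurable (hintε k).aestronglyMeasurable
    have h2 : (fun ω => Q i ω * (c ⬝ᵥ X ω k)) * (fun ω => ε ω k)
        = fun ω => Q i ω * Rr k ω := by
      funext ω
      simp only [Pi.mul_apply, hRr]
      ring
    rw [h2] at h
    rw [h, hεmean k, mul_zero]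
  -- RR facts
  have hcXcXmeas : ∀ i k, Measurable fun z : Fin n → Fin p → ℝ =>
      (c ⬝ᵥ z i) * (c ⬝ᵥ z k) := fun i k => (hmdot c i).mul (hmdot c k)
  have hIntcXcX : ∀ i k, Integrable (fun ω => (c ⬝ᵥ X ω i) * (c ⬝ᵥ X ω k)) μ := by
    intro i k
    refine hTint _ (hcXcXmeas i k) ?_
    simp_rw [hLdot]
    by_cases hik : i = k
    · subst hik
      exact R1int i (IV2 a a)
    · exact R2int hik (IV1 a) (IV1 a)
  have hEcXcX : ∀ i k, ∫ ω, (c ⬝ᵥ X ω i) * (c ⬝ᵥ X ω k) ∂μ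
      = if i = k then a ⬝ᵥ a else 0 := by
    intro i k
    rw [hTval _ (hcXcXmeas i k)]
    simp_rw [hLdot]
    by_cases hik : i = k
    · subst hik
      rw [if_pos rfl, R1val i fun x => (a ⬝ᵥ x) * (a ⬝ᵥ x), MV2]
    · rw [if_neg hik, R2val hik (fun x => a ⬝ᵥ x) (fun x => a ⬝ᵥ x), MV1, mul_zero]
  have hIndepRR : ∀ i k, IndepFun (fun ω => (c ⬝ᵥ X ω i) * (c ⬝ᵥ X ω k))
      (fun ω => ε ω i * ε ω k) μ := by
    intro i k
    exact hindep.comp (hcXcXmeas i k) ((measurable_pi_apply i).mul (measurable_pi_apply k))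
  have hIntεε : ∀ i k, Integrable (fun ω => ε ω i * ε ω k) μ := by
    intro i k
    by_cases hik : i = k
    · subst hik
      have := hεint i
      simp_rw [sq] at this
      exact this
    · have h := (hiid.indepFun hik).integrable_mul (hintε i) (hintε k)
      exact h
  have hEεε : ∀ i k, ∫ ω, ε ω i * ε ω k ∂μ = if i = k then σ ^ 2 else 0 := by
    intro i k
    by_cases hik : i = k
    · subst hik
      rw [if_pos rfl, ← hεvar i]
      simp_rw [sq]
    · rw [if_neg hik]
      have h := (hiid.indepFun hik).integral_mul_eq_mul_integral (hintε i).aestronglyMeasurable (hintε k).aestronglyMeasurable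
      have h2 : ∫ ω, ε ω i * ε ω k ∂μ = (∫ ω, ε ω i ∂μ) * ∫ ω, ε ω k ∂μ := h
      rw [h2, hεmean i, zero_mul]
  have hIntRR : ∀ i k, Integrable (fun ω => Rr i ω * Rr k ω) μ := by
    intro i k
    have h := (hIndepRR i k).integrable_mul (hIntcXcX i k) (hIntεε i k)
    have h2 : (fun ω => (c ⬝ᵥ X ω i) * (c ⬝ᵥ X ω k)) * (fun ω => ε ω i * ε ω k)
        = fun ω => Rr i ω * Rr k ω := by
      funext ω
      simp only [Pi.mul_apply, hRr]
      ring
    rwa [h2] at h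
  have hERR : ∀ i k, ∫ ω, Rr i ω * Rr k ω ∂μ
      = if i = k then (a ⬝ᵥ a) * σ ^ 2 else 0 := by
    intro i k
    have h := (hIndepRR i k).integral_mul_eq_mul_integral (hIntcXcX i k).aestronglyMeasurable (hIntεε i k).aestronglyMeasurable
    have h2 : (fun ω => (c ⬝ᵥ X ω i) * (c ⬝ᵥ X ω k)) * (fun ω => ε ω i * ε ω k)
        = fun ω => Rr i ω * Rr k ω := by
      funext ω
      simp only [Pi.mul_apply, hRr]
      ring
    rw [h2] at h
    rw [h, hEcXcX i k, hEεε i k]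
    by_cases hik : i = k <;> simp [hik]
  -- the sum T
  set T : Ω → ℝ := fun ω => ∑ i, (Q i ω + Rr i ω) with hT
  have hIntT : Integrable T μ := by
    rw [hT]
    exact integrable_finset_sum _ fun i _ => (hIntQ i).add (hIntR i)
  have hET : ∫ ω, T ω ∂μ = n * m := by
    have h0 : ∫ ω, T ω ∂μ = ∑ i, ∫ ω, (Q i ω + Rr i ω) ∂μ := by
      rw [hT]
      exact integral_finset_sum Finset.univ
        (f := fun i (ω : Ω) => Q i ω + Rr i ω) (fun i _ => (hIntQ i).add (hIntR i))
    rw [h0]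
    have h1 : ∀ i ∈ Finset.univ, (∫ ω, (Q i ω + Rr i ω) ∂μ) = m := fun i _ => by
      rw [integral_add (hIntQ i) (hIntR i), hEQ i, hER i, add_zero]
    rw [Finset.sum_congr rfl h1, Finset.sum_const, Finset.card_univ, Fintype.card_fin,
      nsmul_eq_mul]
  have hPairInt : ∀ i k, Integrable (fun ω => (Q i ω + Rr i ω) * (Q k ω + Rr k ω)) μ := by
    intro i k
    have hfe : (fun ω => (Q i ω + Rr i ω) * (Q k ω + Rr k ω))
        = fun ω => Q i ω * Q k ω + Q i ω * Rr k ω + Q k ω * Rr i ω + Rr i ω * Rr k ω := by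
      funext ω; ring
    rw [hfe]
    exact (((hIntQQ i k).add (hIntQR i k)).add (hIntQR k i)).add (hIntRR i k)
  have hEPair : ∀ i k, ∫ ω, (Q i ω + Rr i ω) * (Q k ω + Rr k ω) ∂μ
      = if i = k then (a ⬝ᵥ a) * (t ⬝ᵥ t) + 2 * m ^ 2 + (a ⬝ᵥ a) * σ ^ 2 else m * m := by
    intro i k
    have hfe : (fun ω => (Q i ω + Rr i ω) * (Q k ω + Rr k ω))
        = fun ω => Q i ω * Q k ω + Q i ω * Rr k ω + Q k ω * Rr i ω + Rr i ω * Rr k ω := by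
      funext ω; ring
    rw [hfe, integral_add (f := fun ω => Q i ω * Q k ω + Q i ω * Rr k ω + Q k ω * Rr i ω)
        (g := fun ω => Rr i ω * Rr k ω)
        (by exact ((hIntQQ i k).add (hIntQR i k)).add (hIntQR k i)) (hIntRR i k),
      integral_add (f := fun ω => Q i ω * Q k ω + Q i ω * Rr k ω)
        (g := fun ω => Q k ω * Rr i ω)
        (by exact (hIntQQ i k).add (hIntQR i k)) (hIntQR k i),
      integral_add (f := fun ω => Q i ω * Q k ω) (g := fun ω => Q i ω * Rr k ω)
        (hIntQQ i k) (hIntQR i k), hEQQ i k, hEQR i k, hEQR k i, hERR i k]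
    by_cases hik : i = k <;> simp [hik]
  have hTTexp : (fun ω => T ω * T ω)
      = fun ω => ∑ i, ∑ k, (Q i ω + Rr i ω) * (Q k ω + Rr k ω) := by
    funext ω
    rw [hT, Finset.sum_mul_sum]
  have hIntTT : Integrable (fun ω => T ω * T ω) μ := by
    rw [hTTexp]
    exact integrable_finset_sum _ fun i _ => integrable_finset_sum _ fun k _ => hPairInt i k
  have hETT : ∫ ω, T ω * T ω ∂μ
      = n * ((a ⬝ᵥ a) * (t ⬝ᵥ t) + 2 * m ^ 2 + (a ⬝ᵥ a) * σ ^ 2 - m * m)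
        + (n * n) * (m * m) := by
    rw [hTTexp, integral_finset_sum _ fun i _ =>
      integrable_finset_sum _ fun k _ => hPairInt i k]
    have h1 : ∀ i ∈ (Finset.univ : Finset (Fin n)),
        (∫ ω, ∑ k, (Q i ω + Rr i ω) * (Q k ω + Rr k ω) ∂μ)
          = (a ⬝ᵥ a) * (t ⬝ᵥ t) + 2 * m ^ 2 + (a ⬝ᵥ a) * σ ^ 2 - m * m + n * (m * m) := by
      intro i _
      rw [integral_finset_sum _ fun k _ => hPairInt i k]
      have h2 : ∀ k ∈ (Finset.univ : Finset (Fin n)),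
          (∫ ω, (Q i ω + Rr i ω) * (Q k ω + Rr k ω) ∂μ)
            = m * m + (if i = k
                then (a ⬝ᵥ a) * (t ⬝ᵥ t) + 2 * m ^ 2 + (a ⬝ᵥ a) * σ ^ 2 - m * m else 0) := by
        intro k _
        rw [hEPair i k]
        by_cases hik : i = k <;> simp [hik]
      rw [Finset.sum_congr rfl h2, Finset.sum_add_distrib, Finset.sum_const,
        Finset.sum_ite_eq, Finset.card_univ, Fintype.card_fin, nsmul_eq_mul]
      simp only [Finset.mem_univ, if_true]
      ring
    rw [Finset.sum_congr rfl h1, Finset.sum_const, Finset.card_univ, Fintype.card_fin,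
      nsmul_eq_mul]
    ring
  -- rewrite the estimator
  have hZeq : (fun ω => ((n : ℝ)⁻¹ • ((Cm * (Matrix.of (X ω))ᵀ) *ᵥ
      (Matrix.of (X ω) *ᵥ βs + ε ω))) j) = fun ω => (n : ℝ)⁻¹ * T ω := by
    funext ω
    simp only [Pi.smul_apply, smul_eq_mul]
    congr 1
    rw [hT]
    simp only [Matrix.mulVec, Matrix.mul_apply, dotProduct, Matrix.transpose_apply,
      Matrix.of_apply, Pi.add_apply, hQ, hRr, hcv]
    refine Finset.sum_congr rfl fun k _ => ?_
    have hswap : ∑ l, X ω k l * βs l = ∑ l, βs l * X ω k l :=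
      Finset.sum_congr rfl fun l _ => mul_comm _ _
    rw [hswap]
    ring
  have hEZval : ∫ ω, (n : ℝ)⁻¹ * T ω ∂μ = m := by
    rw [integral_const_mul, hET]
    field_simp
  have hexp2 : ∀ ω : Ω, ((n : ℝ)⁻¹ * T ω - m) ^ 2
      = ((n : ℝ)⁻¹ * (n : ℝ)⁻¹) * (T ω * T ω) - (2 * m * (n : ℝ)⁻¹) * T ω + m ^ 2 :=
    fun ω => by ring
  rw [hZeq]
  simp only [rvVar]
  rw [hEZval]
  simp_rw [hexp2]
  rw [integral_add
      (f := fun ω => ((n : ℝ)⁻¹ * (n : ℝ)⁻¹) * (T ω * T ω) - (2 * m * (n : ℝ)⁻¹) * T ω)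
      (g := fun _ => m ^ 2)
      (by exact (hIntTT.const_mul _).sub (hIntT.const_mul _)) (integrable_const _),
    integral_sub (f := fun ω => ((n : ℝ)⁻¹ * (n : ℝ)⁻¹) * (T ω * T ω))
      (g := fun ω => (2 * m * (n : ℝ)⁻¹) * T ω)
      (hIntTT.const_mul _) (hIntT.const_mul _), integral_const_mul,
    integral_const_mul, integral_const, hETT, hET]
  simp only [measure_univ, probReal_univ, ENNReal.toReal_one, smul_eq_mul, one_mul]
  have hfold1 : (Cm * PAperp) j j = a ⬝ᵥ a := by
    rw [hCm]; exact haa.symm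
  have hfold2 : sqNorm t = t ⬝ᵥ t := by
    have h2' : sqNorm t = sqNorm (S *ᵥ βs) := by rw [ht]
    rw [h2', ← htt]
  rw [← hm, hfold1, hfold2]
  field_simp
  ring

end
end
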